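/- arXiv:1905.08503 — 7 statements merged into one kernel-verified Lean document; each statement's English description precedes it below -/
import Mathlib

section
/- Let K ⊂ ℝⁿ be a compact convex set and let φ : K → ℝ be a continuous convex function. Then for every ε > 0 there exist T > 0 and a function f_T ∈ LSE_T such that |f_T(x) − φ(x)| ≤ ε for all x ∈ K. -/
open Filter Topology

lemma affine_minorant (n : ℕ) (𝒦 : Set (Fin n → ℝ)) (hcomp : IsCompact 𝒦)
    (φ : (Fin n → ℝ) → ℝ) (hcont : ContinuousOn φ 𝒦) (hconv : ConvexOn ℝ 𝒦 φ)
    (ε : ℝ) (hε : 0 < ε) (y : Fin n → ℝ) (hy : y ∈ 𝒦) :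
    ∃ (a : Fin n → ℝ) (b : ℝ),
      (∀ x ∈ 𝒦, (∑ i, a i * x i) + b ≤ φ x) ∧ φ y - ε ≤ (∑ i, a i * y i) + b := by
  set E : Set ((Fin n → ℝ) × ℝ) := {p | p.1 ∈ 𝒦 ∧ φ p.1 ≤ p.2} with hEdef
  have hEconv : Convex ℝ E := hconv.convex_epigraph
  have hEclosed : IsClosed E := by
    rw [← isSeqClosed_iff_isClosed]
    intro p q hp hq
    have h1 : Tendsto (fun m => (p m).1) atTop (𝓝 q.1) :=
      (continuous_fst.tendsto q).comp hq
    have hq1 : q.1 ∈ 𝒦 :=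
      hcomp.isClosed.mem_of_tendsto h1 (Filter.Eventually.of_forall fun m => (hp m).1)
    have h1' : Tendsto (fun m => (p m).1) atTop (𝓝[𝒦] q.1) :=
      tendsto_nhdsWithin_iff.2 ⟨h1, Filter.Eventually.of_forall fun m => (hp m).1⟩
    have hφ : Tendsto (fun m => φ (p m).1) atTop (𝓝 (φ q.1)) :=
      Filter.Tendsto.comp (hcont q.1 hq1) h1'
    have h2 : Tendsto (fun m => (p m).2) atTop (𝓝 q.2) :=
      (continuous_snd.tendsto q).comp hq
    exact ⟨hq1, le_of_tendsto_of_tendsto hφ h2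
      (Filter.Eventually.of_forall fun m => (hp m).2)⟩
  have hne : ((y, φ y - ε) : (Fin n → ℝ) × ℝ) ∉ E := by
    intro h
    have := h.2
    simp only at this
    linarith
  obtain ⟨f, u, hfu, huf⟩ := geometric_hahn_banach_closed_point hEconv hEclosed hne
  set c : ℝ := f (0, 1) with hcdef
  have hdec : ∀ (x : Fin n → ℝ) (t : ℝ), f (x, t) = f (x, 0) + t * c := by
    intro x t
    have hxt : ((x, t) : (Fin n → ℝ) × ℝ) = (x, 0) + t • ((0 : Fin n → ℝ), (1 : ℝ)) := by
      simp [Prod.ext_iff]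
    rw [hxt, map_add, map_smul, smul_eq_mul]
  have hc : c < 0 := by
    rcases lt_trichotomy c 0 with h | h | h
    · exact h
    · -- c = 0 : contradiction
      have h1 := hfu (y, φ y) ⟨hy, le_refl _⟩
      have h2 := huf
      rw [hdec, h, mul_zero, add_zero] at h1
      rw [hdec, h, mul_zero, add_zero] at h2
      linarith
    · -- c > 0 : contradiction (take t large)
      set t₀ : ℝ := max (φ y) ((u - f (y, 0)) / c + 1) with ht₀
      have hmem : ((y, t₀) : (Fin n → ℝ) × ℝ) ∈ E := ⟨hy, le_max_left _ _⟩
      have h1 := hfu _ hmem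
      rw [hdec] at h1
      have h2 : (u - f (y, 0)) / c + 1 ≤ t₀ := le_max_right _ _
      have h3 : (u - f (y, 0)) / c * c = u - f (y, 0) := div_mul_cancel₀ _ h.ne'
      nlinarith
  -- decompose the linear part
  set L : (Fin n → ℝ) →ₗ[ℝ] ℝ :=
    (f.toLinearMap).comp (LinearMap.inl ℝ (Fin n → ℝ) ℝ) with hLdef
  have hL : ∀ x, f (x, 0) = ∑ i, x i * f ((fun j => if i = j then 1 else 0 : Fin n → ℝ), 0) := by
    intro x
    have := LinearMap.pi_apply_eq_sum_univ L x
    simpa [hLdef, smul_eq_mul] using this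
  set a : Fin n → ℝ := fun i => f ((fun j => if i = j then 1 else 0 : Fin n → ℝ), 0) / (-c)
    with hadef
  have key : ∀ x, (∑ i, a i * x i) = f (x, 0) / (-c) := by
    intro x
    rw [hL, Finset.sum_div]
    exact Finset.sum_congr rfl fun i _ => by rw [hadef]; ring
  have hcpos : 0 < -c := by linarith
  refine ⟨a, φ y - ε - ∑ i, a i * y i, ?_, le_of_eq (by ring)⟩
  intro x hx
  have h1 := hfu (x, φ x) ⟨hx, le_refl _⟩
  have h2 := huf
  rw [hdec] at h1 h2
  have hx' : f (x, 0) = (∑ i, a i * x i) * (-c) := by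
    rw [key, div_mul_cancel₀ _ hcpos.ne']
  have hy' : f (y, 0) = (∑ i, a i * y i) * (-c) := by
    rw [key, div_mul_cancel₀ _ hcpos.ne']
  have hmul : ((∑ i, a i * x i) + (φ y - ε - ∑ i, a i * y i) - φ x) * (-c) < 0 := by
    nlinarith
  nlinarith [hmul, hcpos]

lemma lse_est (K : ℕ) (hK : 0 < K) (T : ℝ) (hT : 0 < T) (v : Fin K → ℝ) (M c : ℝ)
    (hub : ∀ k, v k ≤ M) (hlb : ∃ k, c ≤ v k) :
    c ≤ T * Real.log (∑ k, Real.exp (v k / T)) ∧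
      T * Real.log (∑ k, Real.exp (v k / T)) ≤ M + T * Real.log K := by
  haveI : Nonempty (Fin K) := Fin.pos_iff_nonempty.1 hK
  have hspos : 0 < ∑ k, Real.exp (v k / T) :=
    Finset.sum_pos (fun k _ => Real.exp_pos _) Finset.univ_nonempty
  constructor
  · obtain ⟨k₀, hk₀⟩ := hlb
    have h1 : Real.exp (v k₀ / T) ≤ ∑ k, Real.exp (v k / T) :=
      Finset.single_le_sum (f := fun k => Real.exp (v k / T))
        (fun k _ => (Real.exp_pos _).le) (Finset.mem_univ k₀)
    have h2 : v k₀ / T ≤ Real.log (∑ k, Real.exp (v k / T)) :=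
      (Real.le_log_iff_exp_le hspos).2 h1
    have h3 := mul_le_mul_of_nonneg_left h2 hT.le
    have h4 : T * (v k₀ / T) = v k₀ := by field_simp
    linarith
  · have h1 : ∑ k, Real.exp (v k / T) ≤ K * Real.exp (M / T) := by
      calc ∑ k, Real.exp (v k / T) ≤ ∑ _k : Fin K, Real.exp (M / T) :=
            Finset.sum_le_sum fun k _ =>
              Real.exp_le_exp.2 (by gcongr; exact hub k)
        _ = K * Real.exp (M / T) := by
            rw [Finset.sum_const, Finset.card_univ, Fintype.card_fin, nsmul_eq_mul]
    have h2 := Real.log_le_log hspos h1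
    rw [Real.log_mul (by positivity) (Real.exp_pos _).ne', Real.log_exp] at h2
    have h3 := mul_le_mul_of_nonneg_left h2 hT.le
    have h4 : T * (Real.log K + M / T) = T * Real.log K + M := by field_simp
    linarith

/-- **Universal approximation of convex functions by LSE_T functions.**
Let `𝒦 ⊂ ℝⁿ` be a compact convex set and `φ : 𝒦 → ℝ` a continuous convex function.
Then for every `ε > 0` there exist `T > 0` and a function
`f_T(x) = T·log (∑ₖ exp(⟨α⁽ᵏ⁾, x⟩/T + βₖ/T))` in `LSE_T` such that
`|f_T(x) − φ(x)| ≤ ε` for all `x ∈ 𝒦`. -/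
theorem lse_universal_approx_convex
    (n : ℕ) (𝒦 : Set (Fin n → ℝ)) (hcomp : IsCompact 𝒦) (hconvset : Convex ℝ 𝒦)
    (φ : (Fin n → ℝ) → ℝ) (hcont : ContinuousOn φ 𝒦) (hconv : ConvexOn ℝ 𝒦 φ)
    (ε : ℝ) (hε : 0 < ε) :
    ∃ (T : ℝ), 0 < T ∧
      ∃ (K : ℕ), 0 < K ∧
        ∃ (α : Fin K → Fin n → ℝ) (β : Fin K → ℝ),
          ∀ x ∈ 𝒦,
            |T * Real.log (∑ k, Real.exp ((∑ i, α k i * x i) / T + β k / T)) - φ x| ≤ ε := by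
  rcases Set.eq_empty_or_nonempty 𝒦 with h𝒦 | ⟨x₀, hx₀⟩
  · exact ⟨1, one_pos, 1, one_pos, fun _ _ => 0, fun _ => 0, by simp [h𝒦]⟩
  have haff : ∀ y : 𝒦, ∃ (a : Fin n → ℝ) (b : ℝ),
      (∀ x ∈ 𝒦, (∑ i, a i * x i) + b ≤ φ x) ∧
      φ y - ε / 2 ≤ (∑ i, a i * (y : Fin n → ℝ) i) + b :=
    fun y => affine_minorant n 𝒦 hcomp φ hcont hconv (ε / 2) (by linarith) y y.2
  choose a b hab hval using haff
  haveI : CompactSpace 𝒦 := isCompact_iff_compactSpace.mp hcomp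
  set U : 𝒦 → Set 𝒦 :=
    fun y => {x : 𝒦 | φ x - ((∑ i, a y i * (x : Fin n → ℝ) i) + b y) < ε} with hUdef
  have hUopen : ∀ y, IsOpen (U y) := by
    intro y
    have hco : Continuous fun x : 𝒦 =>
        φ x - ((∑ i, a y i * (x : Fin n → ℝ) i) + b y) := by
      refine (hcont.restrict).sub ?_
      exact ((continuous_finset_sum _ fun i _ =>
        (continuous_const.mul ((continuous_apply i).comp continuous_subtype_val))).add
        continuous_const)
    exact isOpen_lt hco continuous_const
  have hUcov : (Set.univ : Set 𝒦) ⊆ ⋃ y, U y := by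
    intro x _
    refine Set.mem_iUnion.2 ⟨x, ?_⟩
    have := hval x
    simp only [hUdef, Set.mem_setOf_eq]
    linarith
  obtain ⟨t, ht⟩ := isCompact_univ.elim_finite_subcover U hUopen hUcov
  have htne : t.Nonempty := by
    rcases Set.mem_iUnion₂.1 (ht (Set.mem_univ (⟨x₀, hx₀⟩ : 𝒦))) with ⟨y, hyt, -⟩
    exact ⟨y, hyt⟩
  have hKpos : 0 < t.card := Finset.card_pos.2 htne
  have hlogK : 0 ≤ Real.log t.card := Real.log_nonneg (by exact_mod_cast hKpos)
  set T : ℝ := ε / (1 + Real.log t.card) with hT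
  have hTpos : 0 < T := div_pos hε (by linarith)
  have hTlog : T * Real.log t.card ≤ ε := by
    rw [hT, div_mul_eq_mul_div, div_le_iff₀ (by linarith : (0:ℝ) < 1 + Real.log t.card)]
    nlinarith
  set e := t.equivFin with he
  refine ⟨T, hTpos, t.card, hKpos,
    fun k => a ↑(e.symm k), fun k => b ↑(e.symm k), ?_⟩
  intro x hx
  simp only [← add_div]
  obtain ⟨y, hyt, hyU⟩ := Set.mem_iUnion₂.1 (ht (Set.mem_univ (⟨x, hx⟩ : 𝒦)))
  have hyU' : φ x - ((∑ i, a y i * x i) + b y) < ε := hyU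
  have hlb : ∃ k : Fin t.card,
      φ x - ε ≤ (fun k => (∑ i, a ↑(e.symm k) i * x i) + b ↑(e.symm k)) k := by
    refine ⟨e ⟨y, hyt⟩, ?_⟩
    show φ x - ε ≤ (∑ i, a ↑(e.symm (e ⟨y, hyt⟩)) i * x i) + b ↑(e.symm (e ⟨y, hyt⟩))
    rw [Equiv.symm_apply_apply]
    linarith
  obtain ⟨hl, hu⟩ := lse_est t.card hKpos T hTpos
    (fun k => (∑ i, a ↑(e.symm k) i * x i) + b ↑(e.symm k)) (φ x) (φ x - ε)
    (fun k => hab (e.symm k) x hx) hlb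
  exact abs_le.2 ⟨by linarith, by linarith⟩
end

section
/- Let K ⊂ ℝⁿ be a compact convex set and let φ : K → ℝ be a continuous convex function. Then for every ε > 0 there exist a positive integer p and a function f_T ∈ LSE_T with T = 1/p and with rational parameters such that |f_T(x) − φ(x)| ≤ ε for all x ∈ K. -/
open Real

/-- Supporting affine minorant for a convex function on a compact convex set. -/
lemma lse_aux_affine_minorant
    (n : ℕ) (𝒦 : Set (Fin n → ℝ)) (hcomp : IsCompact 𝒦) (hconvset : Convex ℝ 𝒦)
    (ψ : (Fin n → ℝ) → ℝ) (hψc : Continuous ψ) (hψconv : ConvexOn ℝ 𝒦 ψ)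
    (δ : ℝ) (hδ : 0 < δ) (y : Fin n → ℝ) (hy : y ∈ 𝒦) :
    ∃ (a : Fin n → ℝ) (b : ℝ),
      (∀ x ∈ 𝒦, (∑ i, a i * x i) + b ≤ ψ x) ∧ ψ y - δ < (∑ i, a i * y i) + b := by
  classical
  set E := {p : (Fin n → ℝ) × ℝ | p.1 ∈ 𝒦 ∧ ψ p.1 ≤ p.2} with hE
  have hEconv : Convex ℝ E := by
    rintro ⟨x1, t1⟩ ⟨hx1, ht1⟩ ⟨x2, t2⟩ ⟨hx2, ht2⟩ s r hs hr hsr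
    refine ⟨hconvset hx1 hx2 hs hr hsr, ?_⟩
    have := hψconv.2 hx1 hx2 hs hr hsr
    simp only [smul_eq_mul] at this ⊢
    have h1 : s * ψ x1 ≤ s * t1 := mul_le_mul_of_nonneg_left ht1 hs
    have h2 : r * ψ x2 ≤ r * t2 := mul_le_mul_of_nonneg_left ht2 hr
    calc ψ (s • x1 + r • x2) ≤ s * ψ x1 + r * ψ x2 := this
      _ ≤ s * t1 + r * t2 := add_le_add h1 h2
  have hEclosed : IsClosed E := by
    have h1 : IsClosed {p : (Fin n → ℝ) × ℝ | p.1 ∈ 𝒦} :=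
      hcomp.isClosed.preimage continuous_fst
    have h2 : IsClosed {p : (Fin n → ℝ) × ℝ | ψ p.1 ≤ p.2} :=
      isClosed_le (hψc.comp continuous_fst) continuous_snd
    exact h1.inter h2
  have hpt : ((y, ψ y - δ) : (Fin n → ℝ) × ℝ) ∉ E := by
    rintro ⟨-, h⟩
    simp only at h
    linarith
  obtain ⟨L, u, hL1, hL2⟩ := geometric_hahn_banach_point_closed hEconv hEclosed hpt
  set c := L ((0 : Fin n → ℝ), (1 : ℝ)) with hc_def
  have hsplit : ∀ (x : Fin n → ℝ) (t : ℝ), L (x, t) = L (x, 0) + t * c := by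
    intro x t
    have : (x, t) = ((x, (0:ℝ)) + t • ((0 : Fin n → ℝ), (1:ℝ))) := by
      simp [Prod.ext_iff]
    rw [this, map_add, map_smul, smul_eq_mul]
  have hc_pos : 0 < c := by
    rcases lt_trichotomy c 0 with hneg | hzero | hpos
    · exfalso
      set t := max (ψ y) ((u - L (y, 0)) / c) with ht_def
      have htE : ((y, t) : (Fin n → ℝ) × ℝ) ∈ E := ⟨hy, le_max_left _ _⟩
      have h1 := hL2 _ htE
      rw [hsplit] at h1
      have h2 : (u - L (y, 0)) / c ≤ t := le_max_right _ _
      rw [div_le_iff_of_neg hneg] at h2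
      linarith
    · exfalso
      have h1 := hL2 (y, ψ y) ⟨hy, le_refl _⟩
      rw [hsplit] at h1
      rw [hsplit] at hL1
      rw [hzero] at h1 hL1
      linarith
    · exact hpos
  have hM : ∀ x : Fin n → ℝ, L (x, 0) = ∑ i, x i * L (Pi.single i 1, 0) := by
    intro x
    have hxx : (x, (0:ℝ)) = ∑ i, x i • ((Pi.single i 1 : Fin n → ℝ), (0:ℝ)) := by
      rw [Prod.ext_iff]
      constructor
      · rw [Prod.fst_sum]
        simp only [Prod.smul_mk, smul_eq_mul]
        ext j
        simp [Pi.single_apply, Finset.sum_apply, Finset.sum_ite_eq]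
      · rw [Prod.snd_sum]
        simp
    rw [hxx, map_sum]
    exact Finset.sum_congr rfl fun i _ => by rw [map_smul, smul_eq_mul]
  refine ⟨fun i => -(L (Pi.single i 1, 0)) / c, u / c, ?_, ?_⟩
  · intro x hx
    have h1 := hL2 (x, ψ x) ⟨hx, le_refl _⟩
    rw [hsplit] at h1
    have key : (∑ i, -(L (Pi.single i 1, 0)) / c * x i) + u / c = (u - L (x, 0)) / c := by
      rw [hM x, eq_div_iff hc_pos.ne', add_mul, Finset.sum_mul]
      have hterm : ∀ i ∈ Finset.univ, -(L (Pi.single i 1, 0)) / c * x i * c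
          = -(x i * L ((Pi.single i 1 : Fin n → ℝ), (0:ℝ))) := by
        intro i _
        field_simp
      rw [Finset.sum_congr rfl hterm, Finset.sum_neg_distrib, div_mul_cancel₀ _ hc_pos.ne']
      ring
    rw [key, div_le_iff₀ hc_pos]
    linarith
  · rw [hsplit] at hL1
    have key : (∑ i, -(L (Pi.single i 1, 0)) / c * y i) + u / c = (u - L (y, 0)) / c := by
      rw [hM y, eq_div_iff hc_pos.ne', add_mul, Finset.sum_mul]
      have hterm : ∀ i ∈ Finset.univ, -(L (Pi.single i 1, 0)) / c * y i * c
          = -(y i * L ((Pi.single i 1 : Fin n → ℝ), (0:ℝ))) := by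
        intro i _
        field_simp
      rw [Finset.sum_congr rfl hterm, Finset.sum_neg_distrib, div_mul_cancel₀ _ hc_pos.ne']
      ring
    rw [key, lt_div_iff₀ hc_pos]
    linarith

/-- Uniform approximation by a max of finitely many rational affine functions. -/
lemma lse_aux_rational_max
    (n : ℕ) (𝒦 : Set (Fin n → ℝ)) (hcomp : IsCompact 𝒦) (hconvset : Convex ℝ 𝒦)
    (hne : 𝒦.Nonempty)
    (ψ : (Fin n → ℝ) → ℝ) (hψc : Continuous ψ) (hψconv : ConvexOn ℝ 𝒦 ψ)
    (δ : ℝ) (hδ : 0 < δ) :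
    ∃ (K : ℕ), 0 < K ∧ ∃ (a : Fin K → Fin n → ℝ) (b : Fin K → ℝ),
      (∀ k i, ∃ q : ℚ, a k i = (q : ℝ)) ∧ (∀ k, ∃ q : ℚ, b k = (q : ℝ)) ∧
      ∀ x ∈ 𝒦, (∀ k, (∑ i, a k i * x i) + b k ≤ ψ x + δ) ∧
        (∃ k, ψ x - δ ≤ (∑ i, a k i * x i) + b k) := by
  classical
  -- bound on 𝒦
  obtain ⟨r, hr⟩ := hcomp.isBounded.subset_closedBall 0
  set R : ℝ := max r 0 with hR
  have hR0 : 0 ≤ R := le_max_right _ _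
  have hxR : ∀ x ∈ 𝒦, ∀ i, |x i| ≤ R := by
    intro x hx i
    have h1 : ‖x‖ ≤ r := by simpa using hr hx
    have h2 : ‖x i‖ ≤ ‖x‖ := norm_le_pi_norm x i
    have : |x i| ≤ r := by simpa using h2.trans h1
    exact this.trans (le_max_left _ _)
  set η : ℝ := δ / (8 * (n * R + 1)) with hη
  have hden : 0 < n * R + 1 := by positivity
  have hη0 : 0 < η := by positivity
  -- for each point y of 𝒦, a rational affine minorant large at y, with an open set
  have main : ∀ y : 𝒦, ∃ (a : Fin n → ℝ) (b : ℝ) (U : Set (Fin n → ℝ)),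
      (∀ i, ∃ q : ℚ, a i = (q : ℝ)) ∧ (∃ q : ℚ, b = (q : ℝ)) ∧ IsOpen U ∧ (y : Fin n → ℝ) ∈ U ∧
      (∀ x ∈ 𝒦, (∑ i, a i * x i) + b ≤ ψ x + δ) ∧
      (∀ x ∈ U, ψ x - δ < (∑ i, a i * x i) + b) := by
    rintro ⟨y, hy⟩
    obtain ⟨a0, b0, hmin, htouch⟩ := lse_aux_affine_minorant n 𝒦 hcomp hconvset ψ hψc hψconv
      (δ/4) (by positivity) y hy
    choose qa hqa using fun i => exists_rat_near (K := ℝ) (a0 i) hη0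
    obtain ⟨qb, hqb⟩ := exists_rat_near (K := ℝ) b0 (show (0:ℝ) < δ/8 by positivity)
    set a : Fin n → ℝ := fun i => (qa i : ℝ) with ha
    set b : ℝ := (qb : ℝ) with hb
    have hclose : ∀ x ∈ 𝒦, |((∑ i, a i * x i) + b) - ((∑ i, a0 i * x i) + b0)| ≤ δ/4 := by
      intro x hx
      have h1 : |(∑ i, a i * x i) - (∑ i, a0 i * x i)| ≤ n * R * η := by
        rw [← Finset.sum_sub_distrib]
        calc |∑ i, (a i * x i - a0 i * x i)| ≤ ∑ i, |a i * x i - a0 i * x i| :=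
              Finset.abs_sum_le_sum_abs _ _
          _ ≤ ∑ _i : Fin n, R * η := by
              apply Finset.sum_le_sum
              intro i _
              rw [← sub_mul, abs_mul]
              have h3 : |a i - a0 i| ≤ η := by
                have := hqa i
                rw [abs_sub_comm]
                exact this.le
              have h4 : |x i| ≤ R := hxR x hx i
              calc |a i - a0 i| * |x i| ≤ η * R :=
                    mul_le_mul h3 h4 (abs_nonneg _) hη0.le
                _ = R * η := mul_comm _ _
          _ = n * R * η := by simp [mul_assoc]
      have h2 : |b - b0| ≤ δ/8 := by rw [abs_sub_comm]; exact hqb.le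
      have h5 : n * R * η ≤ δ/8 := by
        rw [hη, ← mul_div_assoc, div_le_div_iff₀ (by positivity) (by norm_num)]
        nlinarith [hδ.le, hR0, Nat.cast_nonneg (α := ℝ) n]
      calc |((∑ i, a i * x i) + b) - ((∑ i, a0 i * x i) + b0)|
          = |((∑ i, a i * x i) - (∑ i, a0 i * x i)) + (b - b0)| := by ring_nf
        _ ≤ |(∑ i, a i * x i) - (∑ i, a0 i * x i)| + |b - b0| := abs_add_le _ _
        _ ≤ n * R * η + δ/8 := add_le_add h1 h2
        _ ≤ δ/8 + δ/8 := by linarith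
        _ = δ/4 := by ring
    set g : (Fin n → ℝ) → ℝ := fun x => (∑ i, a i * x i) + b with hg
    have hgc : Continuous g := by
      apply Continuous.add _ continuous_const
      exact continuous_finset_sum _ fun i _ => continuous_const.mul (continuous_apply i)
    refine ⟨a, b, {x | ψ x - δ < g x}, fun i => ⟨qa i, rfl⟩, ⟨qb, rfl⟩,
      isOpen_lt (by continuity) hgc, ?_, ?_, fun x hx => hx⟩
    · -- y ∈ U
      have h1 := htouch
      have h2 := hclose y hy
      have h3 := abs_le.1 h2
      simp only [Set.mem_setOf_eq, hg]
      linarith [h3.1]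
    · intro x hx
      have h2 := hclose x hx
      have h3 := abs_le.1 h2
      have h4 := hmin x hx
      linarith [h3.2]
  choose a b U hqa hqb hUopen hyU hupper hlower using main
  have hcover : 𝒦 ⊆ ⋃ y : 𝒦, U y := fun x hx =>
    Set.mem_iUnion.2 ⟨⟨x, hx⟩, hyU ⟨x, hx⟩⟩
  obtain ⟨t, ht⟩ := hcomp.elim_finite_subcover U hUopen hcover
  have htne : t.Nonempty := by
    obtain ⟨x, hx⟩ := hne
    obtain ⟨y, hyt, -⟩ := Set.mem_iUnion₂.1 (ht hx)
    exact ⟨y, hyt⟩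
  have hcard : 0 < t.card := Finset.card_pos.2 htne
  set e := t.equivFin with he
  refine ⟨t.card, hcard, fun k => a (e.symm k : 𝒦), fun k => b (e.symm k : 𝒦),
    fun k i => hqa _ i, fun k => hqb _, ?_⟩
  intro x hx
  constructor
  · intro k
    exact hupper _ x hx
  · obtain ⟨y, hyt, hxy⟩ := Set.mem_iUnion₂.1 (ht hx)
    refine ⟨e ⟨y, hyt⟩, ?_⟩
    have := hlower y x hxy
    simp only [Equiv.symm_apply_apply]
    exact this.le

set_option maxHeartbeats 1000000 in
/-- **LSE approximation with rational parameters.**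
Let `𝒦 ⊂ ℝⁿ` be a compact convex set and `φ : 𝒦 → ℝ` a continuous convex function.
Then for every `ε > 0` there exist a positive integer `p` and a function
`f_T(x) = T·log (∑ₖ exp(⟨α⁽ᵏ⁾, x⟩/T + βₖ/T))` in `LSE_T` with `T = 1/p` and
rational parameters (all entries of the `α⁽ᵏ⁾` and all `βₖ` rational) such that
`|f_T(x) − φ(x)| ≤ ε` for all `x ∈ 𝒦`. -/
theorem lse_rational_approx_convex
    (n : ℕ) (𝒦 : Set (Fin n → ℝ)) (hcomp : IsCompact 𝒦) (hconvset : Convex ℝ 𝒦)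
    (φ : (Fin n → ℝ) → ℝ) (hcont : ContinuousOn φ 𝒦) (hconv : ConvexOn ℝ 𝒦 φ)
    (ε : ℝ) (hε : 0 < ε) :
    ∃ (p : ℕ), 0 < p ∧
      ∃ (T : ℝ), T = 1 / (p : ℝ) ∧
        ∃ (K : ℕ), 0 < K ∧
          ∃ (α : Fin K → Fin n → ℝ) (β : Fin K → ℝ),
            (∀ k i, ∃ q : ℚ, α k i = (q : ℝ)) ∧
            (∀ k, ∃ q : ℚ, β k = (q : ℝ)) ∧
            ∀ x ∈ 𝒦,
              |T * Real.log (∑ k, Real.exp ((∑ i, α k i * x i) / T + β k / T)) - φ x| ≤ ε := by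
  classical
  rcases Set.eq_empty_or_nonempty 𝒦 with hemp | hne
  · exact ⟨1, one_pos, 1, by norm_num, 1, one_pos, 0, 0, fun k i => ⟨0, by simp⟩,
      fun k => ⟨0, by simp⟩, fun x hx => absurd (hemp ▸ hx) (Set.notMem_empty x)⟩
  -- Tietze extension of φ
  obtain ⟨ψC, hψeq⟩ := ContinuousMap.exists_restrict_eq (Y := ℝ) hcomp.isClosed
    ⟨𝒦.restrict φ, hcont.restrict⟩
  set ψ : (Fin n → ℝ) → ℝ := fun x => ψC x with hψdef
  have hψφ : ∀ x ∈ 𝒦, ψ x = φ x := by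
    intro x hx
    have := congrFun (congrArg DFunLike.coe hψeq) ⟨x, hx⟩
    exact this
  have hψconv : ConvexOn ℝ 𝒦 ψ := by
    refine ⟨hconvset, fun x hx y hy s r hs hr hsr => ?_⟩
    have hmem : s • x + r • y ∈ 𝒦 := hconvset hx hy hs hr hsr
    rw [hψφ _ hmem, hψφ _ hx, hψφ _ hy]
    exact hconv.2 hx hy hs hr hsr
  obtain ⟨K, hK, a, b, hqa, hqb, hbounds⟩ := lse_aux_rational_max n 𝒦 hcomp hconvset hne
    ψ ψC.continuous hψconv (ε/2) (by positivity)
  haveI : Nonempty (Fin K) := Fin.pos_iff_nonempty.mp hK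
  set p : ℕ := max 1 ⌈(2 * Real.log K) / ε⌉₊ with hp_def
  have hp : 0 < p := lt_of_lt_of_le one_pos (le_max_left _ _)
  set T : ℝ := 1 / (p : ℝ) with hT_def
  have hpR : (0 : ℝ) < p := by exact_mod_cast hp
  have hT0 : 0 < T := by positivity
  have hTlog : T * Real.log K ≤ ε / 2 := by
    rcases le_or_gt (Real.log K) 0 with h | h
    · calc T * Real.log K ≤ T * 0 := mul_le_mul_of_nonneg_left h hT0.le
        _ ≤ ε / 2 := by rw [mul_zero]; positivity
    · have h1 : (2 * Real.log K) / ε ≤ (p : ℝ) := by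
        calc (2 * Real.log K) / ε ≤ (⌈(2 * Real.log K) / ε⌉₊ : ℝ) := Nat.le_ceil _
          _ ≤ (p : ℝ) := by exact_mod_cast Nat.cast_le.2 (le_max_right _ _)
      rw [div_le_iff₀ hε] at h1
      rw [hT_def, one_div, inv_mul_le_iff₀ hpR]
      linarith
  refine ⟨p, hp, T, rfl, K, hK, a, b, hqa, hqb, ?_⟩
  intro x hx
  obtain ⟨hup, k0, hlow⟩ := hbounds x hx
  set g : Fin K → ℝ := fun k => (∑ i, a k i * x i) + b k with hg
  have hexp : ∀ k, (∑ i, a k i * x i) / T + b k / T = g k / T := fun k => (add_div _ _ _).symm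
  set S : ℝ := ∑ k, Real.exp (g k / T) with hS
  have hrw : ∑ k, Real.exp ((∑ i, a k i * x i) / T + b k / T) = S := by
    apply Finset.sum_congr rfl
    intro k _
    rw [hexp k]
  have hSpos : 0 < S := Finset.sum_pos (fun k _ => Real.exp_pos _) Finset.univ_nonempty
  have hSlow : Real.exp (g k0 / T) ≤ S :=
    Finset.single_le_sum (f := fun k => Real.exp (g k / T))
      (fun k _ => (Real.exp_pos _).le) (Finset.mem_univ k0)
  have hSup : S ≤ (K : ℝ) * Real.exp ((ψ x + ε/2) / T) := by
    calc S ≤ ∑ _k : Fin K, Real.exp ((ψ x + ε/2) / T) := by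
          apply Finset.sum_le_sum
          intro k _
          apply Real.exp_le_exp.2
          gcongr
          exact hup k
      _ = (K : ℝ) * Real.exp ((ψ x + ε/2) / T) := by
          rw [Finset.sum_const, Finset.card_univ, Fintype.card_fin, nsmul_eq_mul]
  have hlower : g k0 ≤ T * Real.log S := by
    have h1 : Real.log (Real.exp (g k0 / T)) ≤ Real.log S :=
      (Real.log_le_log_iff (Real.exp_pos _) hSpos).2 hSlow
    rw [Real.log_exp] at h1
    calc g k0 = T * (g k0 / T) := by field_simp
      _ ≤ T * Real.log S := mul_le_mul_of_nonneg_left h1 hT0.le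
  have hupper : T * Real.log S ≤ T * Real.log K + ψ x + ε/2 := by
    have hKR : (0 : ℝ) < (K : ℝ) := by exact_mod_cast hK
    have h1 : Real.log S ≤ Real.log ((K : ℝ) * Real.exp ((ψ x + ε/2) / T)) :=
      (Real.log_le_log_iff hSpos (by positivity)).2 hSup
    rw [Real.log_mul hKR.ne' (Real.exp_pos _).ne', Real.log_exp] at h1
    have h2 : T * Real.log S ≤ T * (Real.log K + (ψ x + ε/2) / T) :=
      mul_le_mul_of_nonneg_left h1 hT0.le
    calc T * Real.log S ≤ T * (Real.log K + (ψ x + ε/2) / T) := h2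
      _ = T * Real.log K + ψ x + ε/2 := by field_simp; ring
  rw [hrw]
  have hψx := hψφ x hx
  rw [abs_le]
  have hlow2 : φ x - ε/2 ≤ g k0 := by rw [← hψx]; exact hlow
  have hup2 : T * Real.log S ≤ T * Real.log K + φ x + ε/2 := by rw [← hψx]; exact hupper
  have hfin1 : φ x - ε/2 ≤ T * Real.log S := hlow2.trans hlower
  constructor
  · linarith
  · linarith
end

section
/- Let K ⊂ ℝⁿ be a compact convex set and let φ : K → ℝ be a continuous function. Then for every ε > 0 there exist a positive integer p, T = 1/p, and two functions g_T, h_T ∈ LSE_T with rational parameters such that |g_T(x) − h_T(x) − φ(x)| ≤ ε for all x ∈ K. -/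
open Finset
set_option maxHeartbeats 1000000

namespace DLSEAux

variable {n : ℕ}

/-- Rational affine function. -/
def aff (n : ℕ) (p : (Fin n → ℚ) × ℚ) : (Fin n → ℝ) → ℝ :=
  fun x => (∑ i, (p.1 i : ℝ) * x i) + (p.2 : ℝ)

lemma aff_continuous (p : (Fin n → ℚ) × ℚ) : Continuous (aff n p) :=
  (continuous_finset_sum _ fun i _ => continuous_const.mul (continuous_apply i)).add
    continuous_const

lemma aff_add (p q : (Fin n → ℚ) × ℚ) (x : Fin n → ℝ) :
    aff n (p.1 + q.1, p.2 + q.2) x = aff n p x + aff n q x := by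
  simp only [aff, Pi.add_apply, Rat.cast_add, add_mul, Finset.sum_add_distrib]
  ring

/-- Max-affine functions with rational coefficients. -/
def MA (n : ℕ) : Set ((Fin n → ℝ) → ℝ) :=
  { f | ∃ (S : Finset ((Fin n → ℚ) × ℚ)) (hS : S.Nonempty),
      f = fun x => S.sup' hS (fun p => aff n p x) }

lemma MA.continuous {f : (Fin n → ℝ) → ℝ} (hf : f ∈ MA n) : Continuous f := by
  obtain ⟨S, hS, rfl⟩ := hf
  exact Continuous.finset_sup'_apply hS fun p _ => aff_continuous p

lemma MA.aff_mem (p : (Fin n → ℚ) × ℚ) : aff n p ∈ MA n :=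
  ⟨{p}, singleton_nonempty p, by funext x; simp⟩

lemma MA.sup_mem {f g : (Fin n → ℝ) → ℝ} (hf : f ∈ MA n) (hg : g ∈ MA n) :
    (fun x => max (f x) (g x)) ∈ MA n := by
  obtain ⟨S, hS, rfl⟩ := hf
  obtain ⟨T, hT, rfl⟩ := hg
  refine ⟨S ∪ T, hS.mono subset_union_left, ?_⟩
  funext x
  rw [Finset.sup'_union hS hT]

lemma MA.add_mem {f g : (Fin n → ℝ) → ℝ} (hf : f ∈ MA n) (hg : g ∈ MA n) :
    (fun x => f x + g x) ∈ MA n := by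
  obtain ⟨S, hS, rfl⟩ := hf
  obtain ⟨T, hT, rfl⟩ := hg
  refine ⟨(S ×ˢ T).image (fun pq => (pq.1.1 + pq.2.1, pq.1.2 + pq.2.2)),
    (hS.product hT).image _, ?_⟩
  funext x
  dsimp only
  rw [Finset.sup'_image]
  apply le_antisymm
  · obtain ⟨p, hp, hps⟩ := S.exists_mem_eq_sup' hS (fun p => aff n p x)
    obtain ⟨q, hq, hqs⟩ := T.exists_mem_eq_sup' hT (fun p => aff n p x)
    rw [hps, hqs, ← aff_add p q x]
    have hmem : (p, q) ∈ S ×ˢ T := Finset.mem_product.mpr ⟨hp, hq⟩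
    exact Finset.le_sup'
      ((fun p => aff n p x) ∘ fun pq => (pq.1.1 + pq.2.1, pq.1.2 + pq.2.2)) hmem
  · apply Finset.sup'_le
    rintro ⟨p, q⟩ hpq
    rw [Finset.mem_product] at hpq
    show aff n (p.1 + q.1, p.2 + q.2) x ≤ _
    rw [aff_add p q x]
    exact add_le_add (Finset.le_sup' (fun p => aff n p x) hpq.1)
      (Finset.le_sup' (fun p => aff n p x) hpq.2)

end DLSEAux

open Finset
set_option maxHeartbeats 1000000

namespace DLSEAux2

lemma max_sub_sub (p q r s : ℝ) :
    max (p - q) (r - s) = max (p + s) (r + q) - (q + s) := by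
  rcases le_total (p - q) (r - s) with h | h
  · rw [max_eq_right h, max_eq_right (by linarith)]; ring
  · rw [max_eq_left h, max_eq_left (by linarith)]; ring

lemma min_sub_sub (p q r s : ℝ) :
    min (p - q) (r - s) = (p + r) - max (q + r) (p + s) := by
  rcases le_total (p - q) (r - s) with h | h
  · rw [min_eq_left h, max_eq_left (by linarith)]; ring
  · rw [min_eq_right h, max_eq_right (by linarith)]; ring

variable {X : Type*} [TopologicalSpace X] [CompactSpace X]

lemma closure_sup_mem {L : Set C(X, ℝ)}
    (hL : ∀ f ∈ L, ∀ g ∈ L, f ⊔ g ∈ L)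
    {f g : C(X, ℝ)} (hf : f ∈ closure L) (hg : g ∈ closure L) :
    f ⊔ g ∈ closure L := by
  rw [Metric.mem_closure_iff] at hf hg ⊢
  intro ε hε
  obtain ⟨f', hf', hdf⟩ := hf ε hε
  obtain ⟨g', hg', hdg⟩ := hg ε hε
  refine ⟨f' ⊔ g', hL f' hf' g' hg', ?_⟩
  rw [ContinuousMap.dist_lt_iff hε]
  intro x
  have h1 : dist (f x) (f' x) < ε := lt_of_le_of_lt (ContinuousMap.dist_apply_le_dist x) hdf
  have h2 : dist (g x) (g' x) < ε := lt_of_le_of_lt (ContinuousMap.dist_apply_le_dist x) hdg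
  have : dist ((f ⊔ g) x) ((f' ⊔ g') x) ≤ max (dist (f x) (f' x)) (dist (g x) (g' x)) := by
    simp only [ContinuousMap.sup_apply, Real.dist_eq]
    exact abs_max_sub_max_le_max _ _ _ _
  exact lt_of_le_of_lt this (max_lt h1 h2)

lemma closure_inf_mem {L : Set C(X, ℝ)}
    (hL : ∀ f ∈ L, ∀ g ∈ L, f ⊓ g ∈ L)
    {f g : C(X, ℝ)} (hf : f ∈ closure L) (hg : g ∈ closure L) :
    f ⊓ g ∈ closure L := by
  rw [Metric.mem_closure_iff] at hf hg ⊢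
  intro ε hε
  obtain ⟨f', hf', hdf⟩ := hf ε hε
  obtain ⟨g', hg', hdg⟩ := hg ε hε
  refine ⟨f' ⊓ g', hL f' hf' g' hg', ?_⟩
  rw [ContinuousMap.dist_lt_iff hε]
  intro x
  have h1 : dist (f x) (f' x) < ε := lt_of_le_of_lt (ContinuousMap.dist_apply_le_dist x) hdf
  have h2 : dist (g x) (g' x) < ε := lt_of_le_of_lt (ContinuousMap.dist_apply_le_dist x) hdg
  have : dist ((f ⊓ g) x) ((f' ⊓ g') x) ≤ max (dist (f x) (f' x)) (dist (g x) (g' x)) := by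
    simp only [ContinuousMap.inf_apply, Real.dist_eq]
    exact abs_min_sub_min_le_max _ _ _ _
  exact lt_of_le_of_lt this (max_lt h1 h2)

end DLSEAux2
open Finset DLSEAux DLSEAux2

namespace DLSEAux3

variable {n : ℕ} {𝒦 : Set (Fin n → ℝ)}

/-- Differences of rational max-affine functions, restricted to `𝒦`. -/
def L0 (n : ℕ) (𝒦 : Set (Fin n → ℝ)) : Set C(𝒦, ℝ) :=
  { f | ∃ a ∈ MA n, ∃ b ∈ MA n, ∀ x : 𝒦, f x = a (x : Fin n → ℝ) - b (x : Fin n → ℝ) }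

lemma L0_sup_mem {f g : C(𝒦, ℝ)} (hf : f ∈ L0 n 𝒦) (hg : g ∈ L0 n 𝒦) :
    f ⊔ g ∈ L0 n 𝒦 := by
  obtain ⟨a, ha, b, hb, hfab⟩ := hf
  obtain ⟨c, hc, d, hd, hgcd⟩ := hg
  refine ⟨_, MA.sup_mem (MA.add_mem ha hd) (MA.add_mem hc hb), _, MA.add_mem hb hd, fun x => ?_⟩
  have : (f ⊔ g) x = max (f x) (g x) := rfl
  rw [this, hfab x, hgcd x, max_sub_sub]

lemma L0_inf_mem {f g : C(𝒦, ℝ)} (hf : f ∈ L0 n 𝒦) (hg : g ∈ L0 n 𝒦) :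
    f ⊓ g ∈ L0 n 𝒦 := by
  obtain ⟨a, ha, b, hb, hfab⟩ := hf
  obtain ⟨c, hc, d, hd, hgcd⟩ := hg
  refine ⟨_, MA.add_mem ha hc, _, MA.sup_mem (MA.add_mem hb hc) (MA.add_mem ha hd), fun x => ?_⟩
  have : (f ⊓ g) x = min (f x) (g x) := rfl
  rw [this, hfab x, hgcd x, min_sub_sub]

/-- The restriction of a real affine function, as a continuous map on `𝒦`. -/
def affR (𝒦 : Set (Fin n → ℝ)) (c : Fin n → ℝ) (d : ℝ) : C(𝒦, ℝ) :=
  ⟨fun x => (∑ i, c i * (x : Fin n → ℝ) i) + d,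
    ((continuous_finset_sum _ fun i _ => continuous_const.mul (continuous_apply i)).add
      continuous_const).comp continuous_subtype_val⟩

variable [CompactSpace 𝒦]

lemma affR_mem_closure {R : ℝ} (hR0 : 0 ≤ R) (hR : ∀ x ∈ 𝒦, ∀ i, |x i| ≤ R)
    (c : Fin n → ℝ) (d : ℝ) : affR 𝒦 c d ∈ closure (L0 n 𝒦) := by
  rw [Metric.mem_closure_iff]
  intro ε hε
  set δ : ℝ := ε / (2 * ((n : ℝ) * R + 1)) with hδdef
  have hden : 0 < (n : ℝ) * R + 1 := by positivity
  have hδ : 0 < δ := by positivity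
  choose q hq using fun i => exists_rat_near (c i) hδ
  obtain ⟨qd, hqd⟩ := exists_rat_near d hδ
  refine ⟨⟨fun x => aff n (q, qd) (x : Fin n → ℝ),
    (aff_continuous _).comp continuous_subtype_val⟩,
    ⟨aff n (q, qd), MA.aff_mem _, aff n (0, 0), MA.aff_mem _, fun x => by
      simp [aff]⟩, ?_⟩
  rw [ContinuousMap.dist_lt_iff hε]
  intro x
  have hx := hR (x : Fin n → ℝ) x.2
  have key : |(∑ i, c i * (x : Fin n → ℝ) i) + d - aff n (q, qd) (x : Fin n → ℝ)| ≤ ε / 2 := by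
    have : (∑ i, c i * (x : Fin n → ℝ) i) + d - aff n (q, qd) (x : Fin n → ℝ)
        = (∑ i, (c i - (q i : ℝ)) * (x : Fin n → ℝ) i) + (d - (qd : ℝ)) := by
      simp only [aff, sub_mul, Finset.sum_sub_distrib]
      ring
    rw [this]
    have hsum : |∑ i, (c i - (q i : ℝ)) * (x : Fin n → ℝ) i| ≤ (n : ℝ) * (δ * R) := by
      calc |∑ i, (c i - (q i : ℝ)) * (x : Fin n → ℝ) i|
          ≤ ∑ i, |(c i - (q i : ℝ)) * (x : Fin n → ℝ) i| := Finset.abs_sum_le_sum_abs _ _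
        _ ≤ ∑ _i : Fin n, δ * R := by
            apply Finset.sum_le_sum
            intro i _
            rw [abs_mul]
            exact mul_le_mul (le_of_lt (hq i)) (hx i) (abs_nonneg _) (le_of_lt hδ)
        _ = (n : ℝ) * (δ * R) := by simp [mul_comm]
    have h2 : |(∑ i, (c i - (q i : ℝ)) * (x : Fin n → ℝ) i) + (d - (qd : ℝ))|
        ≤ (n : ℝ) * (δ * R) + δ := by
      calc _ ≤ |∑ i, (c i - (q i : ℝ)) * (x : Fin n → ℝ) i| + |d - (qd : ℝ)| := abs_add_le _ _
        _ ≤ (n : ℝ) * (δ * R) + δ := add_le_add hsum (le_of_lt hqd)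
    have h3 : (n : ℝ) * (δ * R) + δ = δ * ((n : ℝ) * R + 1) := by ring
    have h4 : δ * ((n : ℝ) * R + 1) = ε / 2 := by
      rw [hδdef]; field_simp
    linarith
  refine lt_of_le_of_lt ?_ (by linarith : ε / 2 < ε)
  simpa [affR, Real.dist_eq] using key

lemma L0_sep {R : ℝ} (hR0 : 0 ≤ R) (hR : ∀ x ∈ 𝒦, ∀ i, |x i| ≤ R) :
    (closure (L0 n 𝒦)).SeparatesPointsStrongly := by
  intro v x y
  by_cases hxy : x = y
  · subst hxy
    refine ⟨affR 𝒦 0 (v x), affR_mem_closure hR0 hR 0 (v x), ?_, ?_⟩ <;> simp [affR]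
  · have hco : (x : Fin n → ℝ) ≠ (y : Fin n → ℝ) := Subtype.coe_injective.ne hxy
    obtain ⟨i, hi⟩ := Function.ne_iff.mp hco
    set m : ℝ := (v y - v x) / ((y : Fin n → ℝ) i - (x : Fin n → ℝ) i) with hm
    have hmi : m * ((y : Fin n → ℝ) i - (x : Fin n → ℝ) i) = v y - v x :=
      div_mul_cancel₀ _ (sub_ne_zero_of_ne (Ne.symm hi))
    set c : Fin n → ℝ := fun j => if j = i then m else 0 with hc
    set d : ℝ := v x - m * (x : Fin n → ℝ) i with hd
    have hsum : ∀ z : 𝒦, (∑ j, c j * (z : Fin n → ℝ) j) = m * (z : Fin n → ℝ) i := by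
      intro z
      rw [hc]
      simp [ite_mul, Finset.sum_ite_eq]
    refine ⟨affR 𝒦 c d, affR_mem_closure hR0 hR c d, ?_, ?_⟩
    · show (∑ j, c j * (x : Fin n → ℝ) j) + d = v x
      rw [hsum x, hd]; ring
    · show (∑ j, c j * (y : Fin n → ℝ) j) + d = v y
      rw [hsum y, hd]
      linarith [hmi]

lemma L0_dense {R : ℝ} (hR0 : 0 ≤ R) (hR : ∀ x ∈ 𝒦, ∀ i, |x i| ≤ R) :
    closure (L0 n 𝒦) = ⊤ := by
  have h := ContinuousMap.sublattice_closure_eq_top (closure (L0 n 𝒦))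
    ⟨affR 𝒦 0 0, affR_mem_closure hR0 hR 0 0⟩
    (fun f hf g hg => closure_inf_mem (fun f hf g hg => L0_inf_mem hf hg) hf hg)
    (fun f hf g hg => closure_sup_mem (fun f hf g hg => L0_sup_mem hf hg) hf hg)
    (L0_sep hR0 hR)
  rwa [closure_closure] at h

end DLSEAux3
open Finset DLSEAux DLSEAux2 DLSEAux3

namespace DLSEAux4

lemma sup'_card {ι : Type*} (S : Finset ι) (hS : S.Nonempty) (g : ι → ℝ)
    (hne : (Finset.univ : Finset (Fin S.card)).Nonempty) :
    Finset.univ.sup' hne (fun k => g ((S.equivFin.symm k : S) : ι)) = S.sup' hS g := by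
  apply le_antisymm
  · apply Finset.sup'_le
    intro k _
    exact Finset.le_sup' g (S.equivFin.symm k).2
  · apply Finset.sup'_le
    intro p hp
    have : g p = g ((S.equivFin.symm (S.equivFin ⟨p, hp⟩) : S) : ι) := by
      rw [Equiv.symm_apply_apply]
    rw [this]
    exact Finset.le_sup' (fun k => g ((S.equivFin.symm k : S) : ι)) (Finset.mem_univ _)

lemma lse_bound {K : ℕ} (hK : 0 < K) (hne : (Finset.univ : Finset (Fin K)).Nonempty)
    {T : ℝ} (hT : 0 < T) (m : Fin K → ℝ) :
    Finset.univ.sup' hne m ≤ T * Real.log (∑ k, Real.exp (m k / T)) ∧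
      T * Real.log (∑ k, Real.exp (m k / T)) ≤
        Finset.univ.sup' hne m + T * Real.log K := by
  set M := Finset.univ.sup' hne m with hM
  have hSpos : 0 < ∑ k, Real.exp (m k / T) :=
    Finset.sum_pos (fun k _ => Real.exp_pos _) hne
  have hKpos : 0 < (K : ℝ) := by exact_mod_cast hK
  constructor
  · obtain ⟨k₀, _, hk₀⟩ := Finset.exists_mem_eq_sup' hne m
    have h1 : Real.exp (M / T) ≤ ∑ k, Real.exp (m k / T) := by
      rw [hM, hk₀]
      exact Finset.single_le_sum (f := fun k => Real.exp (m k / T))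
        (fun k _ => (Real.exp_pos _).le) (Finset.mem_univ k₀)
    have h2 : M / T ≤ Real.log (∑ k, Real.exp (m k / T)) := by
      have := (Real.log_le_log_iff (Real.exp_pos _) hSpos).mpr h1
      rwa [Real.log_exp] at this
    calc M = T * (M / T) := by field_simp
      _ ≤ T * Real.log (∑ k, Real.exp (m k / T)) :=
          mul_le_mul_of_nonneg_left h2 hT.le
  · have h1 : ∑ k, Real.exp (m k / T) ≤ (K : ℝ) * Real.exp (M / T) := by
      calc ∑ k, Real.exp (m k / T) ≤ ∑ _k : Fin K, Real.exp (M / T) := by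
            apply Finset.sum_le_sum
            intro k _
            apply Real.exp_le_exp.mpr
            gcongr
            exact Finset.le_sup' m (Finset.mem_univ k)
        _ = (K : ℝ) * Real.exp (M / T) := by
            simp [Finset.sum_const, nsmul_eq_mul]
    have h2 : Real.log (∑ k, Real.exp (m k / T)) ≤ Real.log K + M / T := by
      have := (Real.log_le_log_iff hSpos (by positivity)).mpr h1
      rwa [Real.log_mul (ne_of_gt hKpos) (ne_of_gt (Real.exp_pos _)), Real.log_exp] at this
    calc T * Real.log (∑ k, Real.exp (m k / T)) ≤ T * (Real.log K + M / T) :=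
          mul_le_mul_of_nonneg_left h2 hT.le
      _ = M + T * Real.log K := by field_simp; ring

end DLSEAux4

open Finset DLSEAux DLSEAux2 DLSEAux3 DLSEAux4 in

/-- **Universal approximation property of DLSE_T.**
Let `𝒦 ⊂ ℝⁿ` be a compact convex set and `φ : 𝒦 → ℝ` a continuous function.
Then for every `ε > 0` there exist a positive integer `p`, `T = 1/p`, and two functions
`g_T, h_T ∈ LSE_T` with rational parameters such that
`|g_T(x) − h_T(x) − φ(x)| ≤ ε` for all `x ∈ 𝒦`. -/
theorem dlse_universal_approx
    (n : ℕ) (𝒦 : Set (Fin n → ℝ)) (hcomp : IsCompact 𝒦) (hconvset : Convex ℝ 𝒦)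
    (φ : (Fin n → ℝ) → ℝ) (hcont : ContinuousOn φ 𝒦)
    (ε : ℝ) (hε : 0 < ε) :
    ∃ (p : ℕ), 0 < p ∧
      ∃ (T : ℝ), T = 1 / (p : ℝ) ∧
        ∃ (K₁ K₂ : ℕ), 0 < K₁ ∧ 0 < K₂ ∧
          ∃ (α : Fin K₁ → Fin n → ℝ) (β : Fin K₁ → ℝ)
            (γ : Fin K₂ → Fin n → ℝ) (δ : Fin K₂ → ℝ),
            (∀ k i, ∃ q : ℚ, α k i = (q : ℝ)) ∧ (∀ k, ∃ q : ℚ, β k = (q : ℝ)) ∧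
            (∀ k i, ∃ q : ℚ, γ k i = (q : ℝ)) ∧ (∀ k, ∃ q : ℚ, δ k = (q : ℝ)) ∧
            ∀ x ∈ 𝒦,
              |T * Real.log (∑ k, Real.exp ((∑ i, α k i * x i) / T + β k / T))
                - T * Real.log (∑ k, Real.exp ((∑ i, γ k i * x i) / T + δ k / T))
                - φ x| ≤ ε := by
  rcases Set.eq_empty_or_nonempty 𝒦 with rfl | ⟨x₀, hx₀⟩
  · exact ⟨1, one_pos, 1, by norm_num, 1, 1, one_pos, one_pos,
      fun _ _ => 0, fun _ => 0, fun _ _ => 0, fun _ => 0,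
      fun k i => ⟨0, by norm_num⟩, fun k => ⟨0, by norm_num⟩,
      fun k i => ⟨0, by norm_num⟩, fun k => ⟨0, by norm_num⟩,
      fun x hx => absurd hx (Set.notMem_empty x)⟩
  haveI : CompactSpace 𝒦 := isCompact_iff_compactSpace.mp hcomp
  obtain ⟨R₀, hR₀⟩ := hcomp.isBounded.exists_norm_le
  have hR0 : (0:ℝ) ≤ max R₀ 0 := le_max_right _ _
  have hR : ∀ x ∈ 𝒦, ∀ i, |x i| ≤ max R₀ 0 := by
    intro x hx i
    calc |x i| = ‖x i‖ := (Real.norm_eq_abs _).symm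
      _ ≤ ‖x‖ := norm_le_pi_norm x i
      _ ≤ R₀ := hR₀ x hx
      _ ≤ max R₀ 0 := le_max_left _ _
  set φ' : C(𝒦, ℝ) := ⟨𝒦.restrict φ, hcont.restrict⟩ with hφ'
  have hdense := L0_dense (n := n) (𝒦 := 𝒦) hR0 hR
  have hmem : φ' ∈ closure (L0 n 𝒦) := by rw [hdense]; trivial
  obtain ⟨f, hfL0, hdist⟩ := Metric.mem_closure_iff.mp hmem (ε/2) (half_pos hε)
  obtain ⟨a, haMA, b, hbMA, hfab⟩ := hfL0
  obtain ⟨S, hS, rfl⟩ := haMA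
  obtain ⟨S', hS', rfl⟩ := hbMA
  have hK₁ : 0 < S.card := Finset.card_pos.mpr hS
  have hK₂ : 0 < S'.card := Finset.card_pos.mpr hS'
  have hne1 : (Finset.univ : Finset (Fin S.card)).Nonempty := ⟨⟨0, hK₁⟩, Finset.mem_univ _⟩
  have hne2 : (Finset.univ : Finset (Fin S'.card)).Nonempty := ⟨⟨0, hK₂⟩, Finset.mem_univ _⟩
  set C : ℝ := Real.log S.card + Real.log S'.card with hCdef
  have hlog1 : (0:ℝ) ≤ Real.log S.card := Real.log_nonneg (by exact_mod_cast hK₁)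
  have hlog2 : (0:ℝ) ≤ Real.log S'.card := Real.log_nonneg (by exact_mod_cast hK₂)
  have hC0 : 0 ≤ C := add_nonneg hlog1 hlog2
  set p : ℕ := ⌈2 * C / ε⌉₊ + 1 with hpdef
  have hp : 0 < p := Nat.succ_pos _
  have hppos : (0:ℝ) < p := by exact_mod_cast hp
  set T : ℝ := 1 / (p : ℝ) with hTdef
  have hT : 0 < T := by positivity
  have hpC : 2 * C / ε ≤ (p : ℝ) := by
    calc 2 * C / ε ≤ (⌈2 * C / ε⌉₊ : ℝ) := Nat.le_ceil _
      _ ≤ p := by exact_mod_cast Nat.le_succ _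
  have hTC : T * C ≤ ε / 2 := by
    rw [div_le_iff₀ hε] at hpC
    have h1 : T * C = C / p := by rw [hTdef]; ring
    rw [h1, div_le_iff₀ hppos]
    linarith
  -- the coefficient functions
  refine ⟨p, hp, T, rfl, S.card, S'.card, hK₁, hK₂,
    (fun k i => ((S.equivFin.symm k : S).1.1 i : ℝ)),
    (fun k => ((S.equivFin.symm k : S).1.2 : ℝ)),
    (fun k i => ((S'.equivFin.symm k : S').1.1 i : ℝ)),
    (fun k => ((S'.equivFin.symm k : S').1.2 : ℝ)),
    fun k i => ⟨_, rfl⟩, fun k => ⟨_, rfl⟩, fun k i => ⟨_, rfl⟩, fun k => ⟨_, rfl⟩,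
    ?_⟩
  intro x hx
  set X : 𝒦 := ⟨x, hx⟩ with hX
  set m₁ : Fin S.card → ℝ :=
    fun k => (∑ i, ((S.equivFin.symm k : S).1.1 i : ℝ) * x i) + ((S.equivFin.symm k : S).1.2 : ℝ)
    with hm₁
  set m₂ : Fin S'.card → ℝ :=
    fun k => (∑ i, ((S'.equivFin.symm k : S').1.1 i : ℝ) * x i)
      + ((S'.equivFin.symm k : S').1.2 : ℝ) with hm₂
  have hsum1 : (∑ k, Real.exp ((∑ i, ((S.equivFin.symm k : S).1.1 i : ℝ) * x i) / T
      + ((S.equivFin.symm k : S).1.2 : ℝ) / T)) = ∑ k, Real.exp (m₁ k / T) := by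
    refine Finset.sum_congr rfl fun k _ => ?_
    simp only [hm₁]
    rw [← add_div]
  have hsum2 : (∑ k, Real.exp ((∑ i, ((S'.equivFin.symm k : S').1.1 i : ℝ) * x i) / T
      + ((S'.equivFin.symm k : S').1.2 : ℝ) / T)) = ∑ k, Real.exp (m₂ k / T) := by
    refine Finset.sum_congr rfl fun k _ => ?_
    simp only [hm₂]
    rw [← add_div]
  have key1 := lse_bound hK₁ hne1 hT m₁
  have key2 := lse_bound hK₂ hne2 hT m₂
  obtain ⟨l1, u1⟩ := key1
  obtain ⟨l2, u2⟩ := key2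
  have hMa : Finset.univ.sup' hne1 m₁ = S.sup' hS (fun p => aff n p x) := by
    rw [hm₁]
    exact sup'_card S hS (fun p => aff n p x) hne1
  have hMb : Finset.univ.sup' hne2 m₂ = S'.sup' hS' (fun p => aff n p x) := by
    rw [hm₂]
    exact sup'_card S' hS' (fun p => aff n p x) hne2
  have h5 : |S.sup' hS (fun p => aff n p x) - S'.sup' hS' (fun p => aff n p x) - φ x|
      ≤ ε / 2 := by
    have h := (ContinuousMap.dist_apply_le_dist (f := f) (g := φ') X).trans_lt
      (by rwa [dist_comm] at hdist)
    rw [Real.dist_eq, hfab X] at h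
    exact h.le
  obtain ⟨d1, d2⟩ := abs_le.mp h5
  rw [hMa] at l1 u1
  rw [hMb] at l2 u2
  have ht1 : 0 ≤ T * Real.log S.card := mul_nonneg hT.le hlog1
  have ht2 : 0 ≤ T * Real.log S'.card := mul_nonneg hT.le hlog2
  have hsumTC : T * Real.log S.card + T * Real.log S'.card = T * C := by
    rw [hCdef]; ring
  rw [hsum1, hsum2, abs_le]
  constructor <;> linarith
end

section
/- Let T > 0 and define f_T : ℝ → ℝ by f_T(x) = T·(log(1 + exp(x/T)) − log(1 + exp((x−1)/T))), and let φ(x) = max(0, min(x, 1)). Then for all x ∈ ℝ, f_T(x) − T·log 2 ≤ φ(x) ≤ f_T(x) + T·log 2. -/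
open Real

lemma softplus_lb (y : ℝ) : max 0 y ≤ Real.log (1 + Real.exp y) := by
  have h1 : (0:ℝ) ≤ Real.log (1 + Real.exp y) := by
    apply Real.log_nonneg; nlinarith [Real.exp_pos y]
  have h2 : y ≤ Real.log (1 + Real.exp y) := by
    calc y = Real.log (Real.exp y) := (Real.log_exp y).symm
    _ ≤ Real.log (1 + Real.exp y) := by
        apply Real.log_le_log (Real.exp_pos y); linarith
  exact max_le h1 h2

lemma softplus_ub (y : ℝ) : Real.log (1 + Real.exp y) ≤ max 0 y + Real.log 2 := by
  rcases le_total y 0 with h | h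
  · have : (1 : ℝ) + Real.exp y ≤ 2 := by
      have := Real.exp_le_one_iff.mpr h; linarith
    have hl := Real.log_le_log (by positivity : (0:ℝ) < 1 + Real.exp y) this
    rw [max_eq_left h]; linarith
  · have : (1 : ℝ) + Real.exp y ≤ 2 * Real.exp y := by
      have := Real.one_le_exp h; linarith
    have hl := Real.log_le_log (by positivity : (0:ℝ) < 1 + Real.exp y) this
    rw [Real.log_mul (by norm_num) (Real.exp_ne_zero y), Real.log_exp] at hl
    rw [max_eq_right h]; linarith

/-- **Explicit DLSE_T approximation of the clamp function.**
Let `T > 0` and `f_T(x) = T·(log(1 + exp(x/T)) − log(1 + exp((x−1)/T)))`, and let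
`φ(x) = max(0, min(x, 1))`.  Then `f_T(x) − T·log 2 ≤ φ(x) ≤ f_T(x) + T·log 2`
for all `x ∈ ℝ`. -/
theorem dlse_clamp_approx (T : ℝ) (hT : 0 < T) (x : ℝ) :
    T * (Real.log (1 + Real.exp (x / T)) - Real.log (1 + Real.exp ((x - 1) / T)))
        - T * Real.log 2
      ≤ max 0 (min x 1) ∧
    max 0 (min x 1)
      ≤ T * (Real.log (1 + Real.exp (x / T)) - Real.log (1 + Real.exp ((x - 1) / T)))
        + T * Real.log 2 := by
  have h1l := softplus_lb (x / T)
  have h1u := softplus_ub (x / T)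
  have h2l := softplus_lb ((x - 1) / T)
  have h2u := softplus_ub ((x - 1) / T)
  have hm1 : T * max 0 (x / T) = max 0 x := by
    rw [mul_max_of_nonneg _ _ hT.le, mul_div_cancel₀ _ hT.ne', mul_zero]
  have hm2 : T * max 0 ((x - 1) / T) = max 0 (x - 1) := by
    rw [mul_max_of_nonneg _ _ hT.le, mul_div_cancel₀ _ hT.ne', mul_zero]
  have hc : max 0 (min x 1) = max 0 x - max 0 (x - 1) := by
    rcases le_total x 0 with h | h
    · rw [min_eq_left (h.trans zero_le_one), max_eq_left h,
        max_eq_left (by linarith : x - 1 ≤ 0)]; ring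
    · rcases le_total x 1 with h' | h'
      · rw [min_eq_left h', max_eq_right h, max_eq_left (by linarith : x - 1 ≤ 0)]; ring
      · rw [min_eq_right h', max_eq_right zero_le_one, max_eq_right (by linarith : 0 ≤ x),
          max_eq_right (by linarith : (0:ℝ) ≤ x - 1)]; ring
  constructor <;> rw [hc] <;> nlinarith [mul_le_mul_of_nonneg_left h1l hT.le,
    mul_le_mul_of_nonneg_left h1u hT.le, mul_le_mul_of_nonneg_left h2l hT.le,
    mul_le_mul_of_nonneg_left h2u hT.le]
end

section
/- Let R ⊂ ℝ_{>0}ⁿ be a compact log-convex set and let ℓ : R → ℝ_{>0} be a continuous positive function. Then for every ε > 0 there exist a positive integer p, T = 1/p, and two functions ψ_T, ψ′_T ∈ GPOS_T with rational parameters such that |(ℓ(x) − ψ_T(x)/ψ′_T(x)) / min(ℓ(x), ψ_T(x)/ψ′_T(x))| ≤ ε for all x ∈ R. -/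
open Finset

namespace GposAux

/-- sup' of a sum over a product finset. -/
lemma sup'_product_add {ι κ : Type*} (s : Finset ι) (t : Finset κ)
    (hs : s.Nonempty) (ht : t.Nonempty) (f : ι → ℝ) (g : κ → ℝ) :
    (s ×ˢ t).sup' (hs.product ht) (fun p => f p.1 + g p.2) = s.sup' hs f + t.sup' ht g := by
  apply le_antisymm
  · apply Finset.sup'_le
    rintro ⟨i, j⟩ hij
    rw [Finset.mem_product] at hij
    exact add_le_add (Finset.le_sup' f hij.1) (Finset.le_sup' g hij.2)
  · obtain ⟨i, hi, hfi⟩ := Finset.exists_mem_eq_sup' hs f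
    obtain ⟨j, hj, hgj⟩ := Finset.exists_mem_eq_sup' ht g
    rw [hfi, hgj]
    have hmem : (i, j) ∈ s ×ˢ t := Finset.mem_product.2 ⟨hi, hj⟩
    exact Finset.le_sup' (fun p => f p.1 + g p.2) hmem

lemma sup'_sub_sup'_le {ι : Type*} (s : Finset ι) (hs : s.Nonempty) (f g : ι → ℝ)
    (c : ℝ) (h : ∀ i ∈ s, f i ≤ g i + c) : s.sup' hs f ≤ s.sup' hs g + c := by
  apply Finset.sup'_le
  intro i hi
  exact (h i hi).trans (by linarith [Finset.le_sup' g hi])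

lemma abs_sup'_sub_sup'_le {ι : Type*} (s : Finset ι) (hs : s.Nonempty) (f g : ι → ℝ)
    (c : ℝ) (h : ∀ i ∈ s, |f i - g i| ≤ c) : |s.sup' hs f - s.sup' hs g| ≤ c := by
  rw [abs_sub_le_iff]
  constructor
  · have := sup'_sub_sup'_le s hs f g c (fun i hi => by
      have := (abs_sub_le_iff.1 (h i hi)).1; linarith)
    linarith
  · have := sup'_sub_sup'_le s hs g f c (fun i hi => by
      have := (abs_sub_le_iff.1 (h i hi)).2; linarith)
    linarith

variable (n : ℕ)

/-- Max-affine functions on `ℝⁿ`. -/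
def MA : Set ((Fin n → ℝ) → ℝ) :=
  { g | ∃ (S : Finset ((Fin n → ℝ) × ℝ)) (hS : S.Nonempty),
      g = fun y => S.sup' hS (fun q => ∑ i, q.1 i * y i + q.2) }

variable {n}

lemma MA.affine (a : Fin n → ℝ) (b : ℝ) : (fun y => ∑ i, a i * y i + b) ∈ MA n :=
  ⟨{(a, b)}, Finset.singleton_nonempty _, by simp⟩

lemma MA.add {g g' : (Fin n → ℝ) → ℝ} (hg : g ∈ MA n) (hg' : g' ∈ MA n) :
    (fun y => g y + g' y) ∈ MA n := by
  obtain ⟨S, hS, rfl⟩ := hg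
  obtain ⟨S', hS', rfl⟩ := hg'
  classical
  refine ⟨(S ×ˢ S').image (fun q => (q.1.1 + q.2.1, q.1.2 + q.2.2)),
    ((hS.product hS').image _), ?_⟩
  funext y
  rw [Finset.sup'_image]
  rw [← sup'_product_add S S' hS hS']
  apply Finset.sup'_congr _ rfl
  rintro ⟨q, q'⟩ -
  simp [Function.comp, add_mul, Finset.sum_add_distrib]
  ring

lemma MA.max {g g' : (Fin n → ℝ) → ℝ} (hg : g ∈ MA n) (hg' : g' ∈ MA n) :
    (fun y => max (g y) (g' y)) ∈ MA n := by
  obtain ⟨S, hS, rfl⟩ := hg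
  obtain ⟨S', hS', rfl⟩ := hg'
  classical
  refine ⟨S ∪ S', hS.mono Finset.subset_union_left, ?_⟩
  funext y
  rw [Finset.sup'_union hS hS']

/-- Every max-affine function admits a `Fin K` presentation. -/
lemma MA.exists_fin {g : (Fin n → ℝ) → ℝ} (hg : g ∈ MA n) :
    ∃ (K : ℕ) (hK : 0 < K) (a : Fin K → Fin n → ℝ) (b : Fin K → ℝ),
      ∀ y, g y = (Finset.univ.sup'
        (Finset.univ_nonempty_iff.mpr ⟨⟨0, hK⟩⟩)
        (fun k => ∑ i, a k i * y i + b k)) := by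
  obtain ⟨S, hS, rfl⟩ := hg
  refine ⟨S.card, Finset.card_pos.2 hS, fun k => (S.equivFin.symm k).1.1,
    fun k => (S.equivFin.symm k).1.2, fun y => ?_⟩
  apply le_antisymm
  · apply Finset.sup'_le
    intro q hq
    have h1 := Finset.le_sup' (fun k => ∑ i, (S.equivFin.symm k).1.1 i * y i
        + (S.equivFin.symm k).1.2) (Finset.mem_univ (S.equivFin ⟨q, hq⟩))
    refine le_trans (le_of_eq ?_) h1
    simp
  · apply Finset.sup'_le
    intro k _
    exact Finset.le_sup' (fun q => ∑ i, q.1 i * y i + q.2) ((S.equivFin.symm k)).2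

end GposAux

namespace GposAux

lemma MA.continuous {n : ℕ} {g : (Fin n → ℝ) → ℝ} (hg : g ∈ MA n) : Continuous g := by
  obtain ⟨S, hS, rfl⟩ := hg
  rw [continuous_iff_continuousAt]
  intro x
  refine ContinuousAt.finset_sup'_apply hS (fun q _ => ?_)
  exact ((continuous_finset_sum _ fun i _ => continuous_const.mul (continuous_apply i)).add
    continuous_const).continuousAt

/-- Density of differences of max-affine functions on a compact set. -/
lemma dense_diff_MA (n : ℕ) (C : Set (Fin n → ℝ)) (hC : IsCompact C)
    (H : C(C, ℝ)) (δ : ℝ) (hδ : 0 < δ) :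
    ∃ g ∈ MA n, ∃ g' ∈ MA n, ∀ y (hy : y ∈ C), |g y - g' y - H ⟨y, hy⟩| ≤ δ := by
  haveI : CompactSpace C := isCompact_iff_compactSpace.mp hC
  classical
  set L : Set C(C, ℝ) :=
    { f | ∃ g ∈ MA n, ∃ g' ∈ MA n, ∀ z : C, f z = g z.1 - g' z.1 } with hL
  -- affine functions belong to L
  have haff : ∀ (a : Fin n → ℝ) (b : ℝ),
      (⟨fun z => ∑ i, a i * (z : Fin n → ℝ) i + b,
        ((continuous_finset_sum _ fun i _ =>
          continuous_const.mul ((continuous_apply i).comp continuous_subtype_val)).add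
          continuous_const)⟩ : C(C, ℝ)) ∈ L := by
    intro a b
    refine ⟨_, MA.affine a b, _, MA.affine 0 0, fun z => ?_⟩
    simp
  have hsup : ∀ᵉ (f₁ ∈ L) (f₂ ∈ L), f₁ ⊔ f₂ ∈ L := by
    rintro f₁ ⟨g₁, hg₁, g₁', hg₁', h₁⟩ f₂ ⟨g₂, hg₂, g₂', hg₂', h₂⟩
    refine ⟨_, MA.max (MA.add hg₁ hg₂') (MA.add hg₂ hg₁'), _, MA.add hg₁' hg₂', fun z => ?_⟩
    have e₁ := h₁ z; have e₂ := h₂ z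
    simp only [ContinuousMap.sup_apply, e₁, e₂]
    rcases le_total (g₁ z.1 - g₁' z.1) (g₂ z.1 - g₂' z.1) with h | h
    · rw [max_eq_right h, max_eq_right (by linarith)]; ring
    · rw [max_eq_left h, max_eq_left (by linarith)]; ring
  have hinf : ∀ᵉ (f₁ ∈ L) (f₂ ∈ L), f₁ ⊓ f₂ ∈ L := by
    rintro f₁ ⟨g₁, hg₁, g₁', hg₁', h₁⟩ f₂ ⟨g₂, hg₂, g₂', hg₂', h₂⟩
    refine ⟨_, MA.add hg₁ hg₂, _, MA.max (MA.add hg₁ hg₂') (MA.add hg₂ hg₁'), fun z => ?_⟩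
    have e₁ := h₁ z; have e₂ := h₂ z
    simp only [ContinuousMap.inf_apply, e₁, e₂]
    rcases le_total (g₁ z.1 - g₁' z.1) (g₂ z.1 - g₂' z.1) with h | h
    · rw [min_eq_left h, max_eq_right (by linarith)]; ring
    · rw [min_eq_right h, max_eq_left (by linarith)]; ring
  have hsep : L.SeparatesPointsStrongly := by
    intro v x y
    by_cases hxy : x = y
    · subst hxy
      refine ⟨_, haff 0 (v x), ?_, ?_⟩ <;> simp
    · have : (x : Fin n → ℝ) ≠ (y : Fin n → ℝ) := fun h => hxy (Subtype.coe_injective h)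
      obtain ⟨i, hi⟩ := Function.ne_iff.mp this
      set t : ℝ := (v y - v x) / ((y : Fin n → ℝ) i - (x : Fin n → ℝ) i) with ht
      have hne : (y : Fin n → ℝ) i - (x : Fin n → ℝ) i ≠ 0 := sub_ne_zero_of_ne (Ne.symm hi)
      refine ⟨_, haff (fun j => if j = i then t else 0)
        (v x - t * (x : Fin n → ℝ) i), ?_, ?_⟩
      · show (∑ j, (if j = i then t else 0) * (x : Fin n → ℝ) j)
            + (v x - t * (x : Fin n → ℝ) i) = v x
        rw [Finset.sum_eq_single i (by intro j _ hj; simp [hj]) (by simp)]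
        simp
      · show (∑ j, (if j = i then t else 0) * (y : Fin n → ℝ) j)
            + (v x - t * (x : Fin n → ℝ) i) = v y
        rw [Finset.sum_eq_single i (by intro j _ hj; simp [hj]) (by simp)]
        rw [if_pos (rfl : i = i)]
        have key : t * ((y : Fin n → ℝ) i - (x : Fin n → ℝ) i) = v y - v x := by
          rw [ht]; exact div_mul_cancel₀ _ hne
        linear_combination key
  have hdense := ContinuousMap.sublattice_closure_eq_top L
    ⟨_, haff 0 0⟩ hinf hsup hsep
  have hHmem : H ∈ closure L := by rw [hdense]; trivial
  obtain ⟨f, hfL, hfd⟩ := Metric.mem_closure_iff.mp hHmem δ hδ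
  obtain ⟨g, hg, g', hg', hfgg⟩ := hfL
  refine ⟨g, hg, g', hg', fun y hy => ?_⟩
  have h1 := ContinuousMap.dist_apply_le_dist (f := H) (g := f) ⟨y, hy⟩
  rw [Real.dist_eq, hfgg ⟨y, hy⟩, abs_sub_comm] at h1
  linarith

end GposAux

namespace GposAux

lemma rel_err {A r ε : ℝ} (hA : 0 < A) (hr : 0 < r) (hε : 0 < ε)
    (h : |Real.log r - Real.log A| ≤ Real.log (1 + ε)) :
    |(A - r) / min A r| ≤ ε := by
  have h1ε : (0 : ℝ) < 1 + ε := by linarith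
  rcases le_total r A with hc | hc
  · rw [min_eq_right hc]
    have hd : A / r ≤ 1 + ε := by
      have hlog : Real.log A - Real.log r ≤ Real.log (1 + ε) := by
        have := (abs_le.1 h).1; linarith
      calc A / r = Real.exp (Real.log A - Real.log r) := by
            rw [Real.exp_sub, Real.exp_log hA, Real.exp_log hr]
        _ ≤ Real.exp (Real.log (1 + ε)) := Real.exp_le_exp.2 hlog
        _ = 1 + ε := Real.exp_log h1ε
    rw [abs_of_nonneg (div_nonneg (by linarith) hr.le)]
    rw [sub_div, div_self hr.ne']
    linarith [(div_le_iff₀ hr).1 hd]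
  · rw [min_eq_left hc]
    have hd : r / A ≤ 1 + ε := by
      have hlog : Real.log r - Real.log A ≤ Real.log (1 + ε) := (abs_le.1 h).2
      calc r / A = Real.exp (Real.log r - Real.log A) := by
            rw [Real.exp_sub, Real.exp_log hr, Real.exp_log hA]
        _ ≤ Real.exp (Real.log (1 + ε)) := Real.exp_le_exp.2 hlog
        _ = 1 + ε := Real.exp_log h1ε
    rw [abs_of_nonpos (div_nonpos_of_nonpos_of_nonneg (by linarith) hA.le)]
    rw [← neg_div, neg_sub, sub_div, div_self hA.ne']
    linarith [(div_le_iff₀ hA).1 hd]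
  
end GposAux

set_option maxHeartbeats 1000000 in
open GposAux in
/-- **Universal approximation of positive functions on the open orthant by ratios of
GPOS_T functions with rational parameters.**
Let `R ⊂ ℝ_{>0}ⁿ` be a compact log-convex set and `ℓ : R → ℝ_{>0}` a continuous positive
function.  Then for every `ε > 0` there exist a positive integer `p`, `T = 1/p`, and two
functions `ψ_T, ψ′_T ∈ GPOS_T` with rational parameters such that
`|(ℓ(x) − ψ_T(x)/ψ′_T(x)) / min(ℓ(x), ψ_T(x)/ψ′_T(x))| ≤ ε` for all `x ∈ R`. -/
theorem gpos_ratio_universal_approx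
    (n : ℕ) (R : Set (Fin n → ℝ)) (hpos : ∀ x ∈ R, ∀ i, 0 < x i)
    (hcomp : IsCompact R)
    (hlogconv : Convex ℝ ((fun x => fun i => Real.log (x i)) '' R))
    (ℓ : (Fin n → ℝ) → ℝ) (hℓpos : ∀ x ∈ R, 0 < ℓ x) (hcont : ContinuousOn ℓ R)
    (ε : ℝ) (hε : 0 < ε) :
    ∃ (p : ℕ), 0 < p ∧
      ∃ (T : ℝ), T = 1 / (p : ℝ) ∧
        ∃ (K K' : ℕ), 0 < K ∧ 0 < K' ∧
          ∃ (c : Fin K → ℝ) (α : Fin K → Fin n → ℝ)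
            (c' : Fin K' → ℝ) (α' : Fin K' → Fin n → ℝ),
            (∀ k, 0 < c k) ∧ (∀ k, 0 < c' k) ∧
            (∀ k i, ∃ q : ℚ, α k i = (q : ℝ)) ∧
            (∀ k, ∃ q : ℚ, Real.log (c k) = (q : ℝ)) ∧
            (∀ k i, ∃ q : ℚ, α' k i = (q : ℝ)) ∧
            (∀ k, ∃ q : ℚ, Real.log (c' k) = (q : ℝ)) ∧
            ∀ x ∈ R,
              |(ℓ x - ((∑ k, c k * ∏ i, (x i ^ (1 / T)) ^ α k i) ^ T)
                      / ((∑ k, c' k * ∏ i, (x i ^ (1 / T)) ^ α' k i) ^ T))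
                / min (ℓ x)
                    (((∑ k, c k * ∏ i, (x i ^ (1 / T)) ^ α k i) ^ T)
                      / ((∑ k, c' k * ∏ i, (x i ^ (1 / T)) ^ α' k i) ^ T))| ≤ ε := by
  classical
  set δ := Real.log (1 + ε) with hδdef
  have hδ : 0 < δ := Real.log_pos (by linarith)
  set C := (fun x => fun i => Real.log (x i)) '' R with hCdef
  have hCont_log : ContinuousOn (fun x : Fin n → ℝ => fun i => Real.log (x i)) R := by
    apply continuousOn_pi.mpr
    intro i
    apply Real.continuousOn_log.comp (continuous_apply i).continuousOn
    intro x hx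
    exact (hpos x hx i).ne'
  have hCcomp : IsCompact C := hcomp.image_of_continuousOn hCont_log
  obtain ⟨M0, hM0⟩ := hCcomp.isBounded.subset_closedBall 0
  set M := max M0 0 with hMdef
  have hMnn : (0:ℝ) ≤ M := le_max_right _ _
  have hMy : ∀ y ∈ C, ∀ i, |y i| ≤ M := by
    intro y hy i
    have h1 : ‖y‖ ≤ M0 := by
      have := hM0 hy
      rwa [Metric.mem_closedBall, dist_zero_right] at this
    calc |y i| = ‖y i‖ := rfl
      _ ≤ ‖y‖ := norm_le_pi_norm y i
      _ ≤ M := h1.trans (le_max_left _ _)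
  -- the exponential map back into `R`
  have hexpmem : ∀ z : C, (fun i => Real.exp ((z : Fin n → ℝ) i)) ∈ R := by
    rintro ⟨z, x, hx, rfl⟩
    have : (fun i => Real.exp (Real.log (x i))) = x :=
      funext fun i => Real.exp_log (hpos x hx i)
    simpa [this] using hx
  have hHcont : Continuous
      (fun z : C => Real.log (ℓ (fun i => Real.exp ((z : Fin n → ℝ) i)))) := by
    have he : Continuous (fun z : C => (fun i => Real.exp ((z : Fin n → ℝ) i))) :=
      continuous_pi fun i =>
        Real.continuous_exp.comp ((continuous_apply i).comp continuous_subtype_val)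
    have hℓe : Continuous (fun z : C => ℓ (fun i => Real.exp ((z : Fin n → ℝ) i))) :=
      hcont.comp_continuous he hexpmem
    exact Real.continuousOn_log.comp_continuous hℓe
      (fun z => Set.mem_compl_singleton_iff.mpr (hℓpos _ (hexpmem z)).ne')
  set H : C(C, ℝ) := ⟨fun z => Real.log (ℓ (fun i => Real.exp ((z : Fin n → ℝ) i))), hHcont⟩
    with hHdef
  obtain ⟨g, hg, g', hg', happrox⟩ := GposAux.dense_diff_MA n C hCcomp H (δ/4) (by positivity)
  obtain ⟨K, hK, a, b, hgeq⟩ := GposAux.MA.exists_fin hg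
  obtain ⟨K', hK', a2, b2, hg'eq⟩ := GposAux.MA.exists_fin hg'
  -- rationalize the coefficients
  set η := δ/16/((n:ℝ)*M+1) with hηdef
  have hηpos : 0 < η := by positivity
  choose aq haq using fun (k : Fin K) (i : Fin n) => exists_rat_near (a k i) hηpos
  choose bq hbq using fun (k : Fin K) =>
    exists_rat_near (b k) (show (0:ℝ) < δ/16 by positivity)
  choose aq' haq' using fun (k : Fin K') (i : Fin n) => exists_rat_near (a2 k i) hηpos
  choose bq' hbq' using fun (k : Fin K') =>
    exists_rat_near (b2 k) (show (0:ℝ) < δ/16 by positivity)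
  -- choose the denominator p
  obtain ⟨p0, hp0⟩ := exists_nat_gt (max (Real.log K) (Real.log K') / (δ/4))
  set p := p0 + 1 with hpdef
  have hp : 0 < p := Nat.succ_pos _
  have hpR : (0:ℝ) < (p:ℝ) := by exact_mod_cast hp
  have hp0p : (p0:ℝ) ≤ (p:ℝ) := by exact_mod_cast Nat.le_succ p0
  have hlogK : Real.log K ≤ (p:ℝ) * (δ/4) := by
    have h1 : Real.log K / (δ/4) < (p:ℝ) :=
      lt_of_le_of_lt (by gcongr; exact le_max_left _ _) (hp0.trans_le hp0p)
    have := (div_lt_iff₀ (by positivity : (0:ℝ) < δ/4)).1 h1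
    linarith
  have hlogK' : Real.log K' ≤ (p:ℝ) * (δ/4) := by
    have h1 : Real.log K' / (δ/4) < (p:ℝ) :=
      lt_of_le_of_lt (by gcongr; exact le_max_right _ _) (hp0.trans_le hp0p)
    have := (div_lt_iff₀ (by positivity : (0:ℝ) < δ/4)).1 h1
    linarith
  refine ⟨p, hp, 1/(p:ℝ), rfl, K, K', hK, hK',
    fun k => Real.exp ((p:ℝ) * (bq k : ℝ)), fun k i => ((aq k i : ℚ) : ℝ),
    fun k => Real.exp ((p:ℝ) * (bq' k : ℝ)), fun k i => ((aq' k i : ℚ) : ℝ),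
    fun k => Real.exp_pos _, fun k => Real.exp_pos _,
    fun k i => ⟨aq k i, rfl⟩,
    fun k => ⟨(p : ℚ) * bq k, by rw [Real.log_exp]; push_cast; ring⟩,
    fun k i => ⟨aq' k i, rfl⟩,
    fun k => ⟨(p : ℚ) * bq' k, by rw [Real.log_exp]; push_cast; ring⟩,
    ?_⟩
  intro x hx
  have hxpos : ∀ i, 0 < x i := hpos x hx
  set y : Fin n → ℝ := fun i => Real.log (x i) with hydef
  have hyC : y ∈ C := ⟨x, hx, rfl⟩
  simp only [one_div_one_div]
  -- rewrite the two posynomial sums as sums of exponentials of affine functions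
  set Aq : Fin K → ℝ := fun k => ∑ i, ((aq k i : ℚ) : ℝ) * y i + (bq k : ℝ) with hAqdef
  set Aq' : Fin K' → ℝ := fun k => ∑ i, ((aq' k i : ℚ) : ℝ) * y i + (bq' k : ℝ) with hAq'def
  have hterm : ∀ (m : ℕ) (u : Fin n → ℝ) (v : ℝ),
      Real.exp ((p:ℝ) * v) * ∏ i, (x i ^ ((p:ℝ))) ^ (u i)
        = Real.exp ((p:ℝ) * (∑ i, u i * y i + v)) := by
    intro m u v
    have h1 : ∀ i, (x i ^ ((p:ℝ))) ^ (u i) = Real.exp (y i * (p:ℝ) * u i) := by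
      intro i
      rw [Real.rpow_def_of_pos (hxpos i)]
      rw [Real.rpow_def_of_pos (Real.exp_pos _), Real.log_exp]
    calc Real.exp ((p:ℝ) * v) * ∏ i, (x i ^ ((p:ℝ))) ^ (u i)
        = Real.exp ((p:ℝ) * v) * ∏ i, Real.exp (y i * (p:ℝ) * u i) := by
          congr 1; exact Finset.prod_congr rfl fun i _ => h1 i
      _ = Real.exp ((p:ℝ) * v) * Real.exp (∑ i, y i * (p:ℝ) * u i) := by
          rw [Real.exp_sum]
      _ = Real.exp ((p:ℝ) * v + ∑ i, y i * (p:ℝ) * u i) := by rw [Real.exp_add]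
      _ = Real.exp ((p:ℝ) * (∑ i, u i * y i + v)) := by
          congr 1
          have : ∑ i, y i * (p:ℝ) * u i = ∑ i, (p:ℝ) * (u i * y i) :=
            Finset.sum_congr rfl fun i _ => by ring
          rw [this, ← Finset.mul_sum]
          ring
  have hS1 : (∑ k, Real.exp ((p:ℝ) * (bq k : ℝ)) * ∏ i, (x i ^ ((p:ℝ))) ^ ((aq k i : ℚ) : ℝ))
      = ∑ k, Real.exp ((p:ℝ) * Aq k) :=
    Finset.sum_congr rfl fun k _ => hterm K (fun i => ((aq k i : ℚ) : ℝ)) (bq k : ℝ)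
  have hS2 : (∑ k, Real.exp ((p:ℝ) * (bq' k : ℝ)) * ∏ i, (x i ^ ((p:ℝ))) ^ ((aq' k i : ℚ) : ℝ))
      = ∑ k, Real.exp ((p:ℝ) * Aq' k) :=
    Finset.sum_congr rfl fun k _ => hterm K' (fun i => ((aq' k i : ℚ) : ℝ)) (bq' k : ℝ)
  rw [hS1, hS2]
  set SA := ∑ k, Real.exp ((p:ℝ) * Aq k) with hSAdef
  set SA' := ∑ k, Real.exp ((p:ℝ) * Aq' k) with hSA'def
  have hneK : (Finset.univ : Finset (Fin K)).Nonempty := ⟨⟨0, hK⟩, Finset.mem_univ _⟩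
  have hneK' : (Finset.univ : Finset (Fin K')).Nonempty := ⟨⟨0, hK'⟩, Finset.mem_univ _⟩
  have hSApos : 0 < SA := Finset.sum_pos (fun k _ => Real.exp_pos _) hneK
  have hSA'pos : 0 < SA' := Finset.sum_pos (fun k _ => Real.exp_pos _) hneK'
  set Gq := Finset.univ.sup' hneK Aq with hGqdef
  set Gq' := Finset.univ.sup' hneK' Aq' with hGq'def
  -- lower and upper bounds for log SA
  have hlogSA : (p:ℝ) * Gq ≤ Real.log SA ∧ Real.log SA ≤ Real.log K + (p:ℝ) * Gq := by
    constructor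
    · rw [Real.le_log_iff_exp_le hSApos]
      obtain ⟨k0, -, hk0⟩ := Finset.exists_mem_eq_sup' hneK Aq
      rw [hGqdef, hk0]
      exact Finset.single_le_sum (f := fun k => Real.exp ((p:ℝ) * Aq k))
        (fun k _ => (Real.exp_pos _).le) (Finset.mem_univ k0)
    · have hhigh : SA ≤ (K:ℝ) * Real.exp ((p:ℝ) * Gq) := by
        have h2 := Finset.sum_le_card_nsmul Finset.univ (fun k => Real.exp ((p:ℝ) * Aq k))
          (Real.exp ((p:ℝ) * Gq)) (fun k _ => Real.exp_le_exp.2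
            (mul_le_mul_of_nonneg_left (Finset.le_sup' Aq (Finset.mem_univ k)) hpR.le))
        simpa [Finset.card_univ, nsmul_eq_mul] using h2
      calc Real.log SA ≤ Real.log ((K:ℝ) * Real.exp ((p:ℝ) * Gq)) :=
            (Real.log_le_log_iff hSApos (by positivity)).2 hhigh
        _ = Real.log K + (p:ℝ) * Gq := by
            rw [Real.log_mul (by exact_mod_cast hK.ne') (Real.exp_pos _).ne', Real.log_exp]
  have hlogSA' : (p:ℝ) * Gq' ≤ Real.log SA' ∧ Real.log SA' ≤ Real.log K' + (p:ℝ) * Gq' := by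
    constructor
    · rw [Real.le_log_iff_exp_le hSA'pos]
      obtain ⟨k0, -, hk0⟩ := Finset.exists_mem_eq_sup' hneK' Aq'
      rw [hGq'def, hk0]
      exact Finset.single_le_sum (f := fun k => Real.exp ((p:ℝ) * Aq' k))
        (fun k _ => (Real.exp_pos _).le) (Finset.mem_univ k0)
    · have hhigh : SA' ≤ (K':ℝ) * Real.exp ((p:ℝ) * Gq') := by
        have h2 := Finset.sum_le_card_nsmul Finset.univ (fun k => Real.exp ((p:ℝ) * Aq' k))
          (Real.exp ((p:ℝ) * Gq')) (fun k _ => Real.exp_le_exp.2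
            (mul_le_mul_of_nonneg_left (Finset.le_sup' Aq' (Finset.mem_univ k)) hpR.le))
        simpa [Finset.card_univ, nsmul_eq_mul] using h2
      calc Real.log SA' ≤ Real.log ((K':ℝ) * Real.exp ((p:ℝ) * Gq')) :=
            (Real.log_le_log_iff hSA'pos (by positivity)).2 hhigh
        _ = Real.log K' + (p:ℝ) * Gq' := by
            rw [Real.log_mul (by exact_mod_cast hK'.ne') (Real.exp_pos _).ne', Real.log_exp]
  -- rationalization error
  have hrat : ∀ (m : ℕ) (hm : (Finset.univ : Finset (Fin m)).Nonempty)
      (u : Fin m → Fin n → ℝ) (v : Fin m → ℝ) (uR : Fin m → Fin n → ℝ) (vR : Fin m → ℝ),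
      (∀ k i, |uR k i - u k i| ≤ η) → (∀ k, |vR k - v k| ≤ δ/16) →
      |Finset.univ.sup' hm (fun k => ∑ i, uR k i * y i + vR k)
        - Finset.univ.sup' hm (fun k => ∑ i, u k i * y i + v k)| ≤ δ/8 := by
    intro m hm u v uR vR hu hv
    apply GposAux.abs_sup'_sub_sup'_le
    intro k _
    have esub : (∑ i, (uR k i - u k i) * y i)
        = ∑ i, uR k i * y i - ∑ i, u k i * y i := by
      rw [← Finset.sum_sub_distrib]
      exact Finset.sum_congr rfl fun i _ => by ring
    have hdiff : (∑ i, uR k i * y i + vR k) - (∑ i, u k i * y i + v k)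
        = ∑ i, (uR k i - u k i) * y i + (vR k - v k) := by
      rw [esub]; ring
    rw [hdiff]
    have h1 : |∑ i, (uR k i - u k i) * y i| ≤ (n:ℝ) * (η * M) := by
      calc |∑ i, (uR k i - u k i) * y i| ≤ ∑ i, |(uR k i - u k i) * y i| :=
            Finset.abs_sum_le_sum_abs _ _
        _ ≤ ∑ _i : Fin n, η * M := by
            apply Finset.sum_le_sum
            intro i _
            rw [abs_mul]
            exact mul_le_mul (hu k i) (hMy y hyC i) (abs_nonneg _) hηpos.le
        _ = (n:ℝ) * (η * M) := by
            rw [Finset.sum_const, Finset.card_univ, Fintype.card_fin, nsmul_eq_mul]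
    have h2 : (n:ℝ) * (η * M) ≤ δ/16 := by
      have h3 : ((n:ℝ) * M) * η ≤ ((n:ℝ) * M + 1) * η :=
        mul_le_mul_of_nonneg_right (by linarith) hηpos.le
      have h4 : ((n:ℝ) * M + 1) * η = δ/16 := by
        rw [hηdef, mul_comm, div_mul_cancel₀ _ (by positivity : ((n:ℝ)*M+1) ≠ 0)]
      calc (n:ℝ) * (η * M) = ((n:ℝ) * M) * η := by ring
        _ ≤ ((n:ℝ) * M + 1) * η := h3
        _ = δ/16 := h4
    calc |∑ i, (uR k i - u k i) * y i + (vR k - v k)|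
        ≤ |∑ i, (uR k i - u k i) * y i| + |vR k - v k| := abs_add_le _ _
      _ ≤ δ/16 + δ/16 := add_le_add (h1.trans h2) (hv k)
      _ = δ/8 := by ring
  have e3 : |Gq - g y| ≤ δ/8 := by
    rw [hGqdef, hgeq y]
    exact hrat K _ a b (fun k i => ((aq k i : ℚ) : ℝ)) (fun k => (bq k : ℝ))
      (fun k i => by rw [abs_sub_comm]; exact (haq k i).le)
      (fun k => by rw [abs_sub_comm]; exact (hbq k).le)
  have e3' : |Gq' - g' y| ≤ δ/8 := by
    rw [hGq'def, hg'eq y]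
    exact hrat K' _ a2 b2 (fun k i => ((aq' k i : ℚ) : ℝ)) (fun k => (bq' k : ℝ))
      (fun k i => by rw [abs_sub_comm]; exact (haq' k i).le)
      (fun k => by rw [abs_sub_comm]; exact (hbq' k).le)
  -- the approximation error from Stone–Weierstrass
  have e4 : |g y - g' y - Real.log (ℓ x)| ≤ δ/4 := by
    have hxy : (fun i => Real.exp (y i)) = x := funext fun i => Real.exp_log (hxpos i)
    have h5 := happrox y hyC
    rw [hHdef] at h5
    simp only [ContinuousMap.coe_mk] at h5
    rwa [hxy] at h5
  -- finish via the relative-error lemma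
  apply GposAux.rel_err (hℓpos x hx)
    (div_pos (Real.rpow_pos_of_pos hSApos _) (Real.rpow_pos_of_pos hSA'pos _)) hε
  have hlogr : Real.log (SA ^ (1/(p:ℝ)) / SA' ^ (1/(p:ℝ)))
      = Real.log SA * (1/(p:ℝ)) - Real.log SA' * (1/(p:ℝ)) := by
    rw [Real.rpow_def_of_pos hSApos, Real.rpow_def_of_pos hSA'pos, ← Real.exp_sub,
      Real.log_exp]
  rw [hlogr]
  have e1 : Gq ≤ Real.log SA * (1/(p:ℝ)) := by
    rw [mul_one_div, le_div_iff₀ hpR]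
    linarith [hlogSA.1]
  have e2 : Real.log SA * (1/(p:ℝ)) ≤ Gq + δ/4 := by
    rw [mul_one_div, div_le_iff₀ hpR]
    nlinarith [hlogSA.2, hlogK]
  have e1' : Gq' ≤ Real.log SA' * (1/(p:ℝ)) := by
    rw [mul_one_div, le_div_iff₀ hpR]
    linarith [hlogSA'.1]
  have e2' : Real.log SA' * (1/(p:ℝ)) ≤ Gq' + δ/4 := by
    rw [mul_one_div, div_le_iff₀ hpR]
    nlinarith [hlogSA'.2, hlogK']
  have l3 := abs_le.1 e3
  have l3' := abs_le.1 e3'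
  have l4 := abs_le.1 e4
  rw [abs_le]
  constructor <;> [skip; skip] <;>
    · simp only [← hδdef]
      linarith [l3.1, l3.2, l3'.1, l3'.2, l4.1, l4.2, e1, e2, e1', e2']
end

section
/- Let R ⊂ ℝ_{>0}ⁿ be a compact log-convex set and let ℓ : R → ℝ_{>0} be a continuous positive function. Then for every ε > 0 there exist positive integers p, q and two polynomials P, Q in n variables with positive real coefficients and nonnegative integer exponents such that the function f(x) = (P(x_1^{1/q}, …, x_n^{1/q}) / Q(x_1^{1/q}, …, x_n^{1/q}))^{1/p} satisfies |(ℓ(x) − f(x)) / min(ℓ(x), f(x))| ≤ ε for all x ∈ R. -/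
open Real

namespace SFUA

/-- Sum of positive-coefficient "monomials in `exp (y i / q)`". -/
noncomputable def psum {n : ℕ} (q K : ℕ) (c : Fin K → ℝ) (a : Fin K → Fin n → ℕ) :
    (Fin n → ℝ) → ℝ :=
  fun y => ∑ k, c k * Real.exp ((∑ i, (a k i : ℝ) * y i) / q)

def IsPS {n : ℕ} (q : ℕ) (F : (Fin n → ℝ) → ℝ) : Prop :=
  ∃ (K : ℕ) (c : Fin K → ℝ) (a : Fin K → Fin n → ℕ),
    0 < K ∧ (∀ k, 0 < c k) ∧ F = psum q K c a

lemma psum_pos {n : ℕ} {q K : ℕ} {c : Fin K → ℝ} {a : Fin K → Fin n → ℕ}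
    (hK : 0 < K) (hc : ∀ k, 0 < c k) (y : Fin n → ℝ) : 0 < psum q K c a y := by
  have : Nonempty (Fin K) := ⟨⟨0, hK⟩⟩
  exact Finset.sum_pos (fun k _ => mul_pos (hc k) (Real.exp_pos _)) Finset.univ_nonempty

lemma IsPS.pos {n : ℕ} {q : ℕ} {F : (Fin n → ℝ) → ℝ} (h : IsPS q F) (y : Fin n → ℝ) :
    0 < F y := by
  obtain ⟨K, c, a, hK, hc, rfl⟩ := h
  exact psum_pos hK hc y

lemma IsPS.continuous {n : ℕ} {q : ℕ} {F : (Fin n → ℝ) → ℝ} (h : IsPS q F) :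
    Continuous F := by
  obtain ⟨K, c, a, hK, hc, rfl⟩ := h
  unfold psum
  refine continuous_finset_sum _ fun k _ => Continuous.mul continuous_const ?_
  exact Real.continuous_exp.comp ((continuous_finset_sum _ fun i _ =>
    (continuous_const.mul (continuous_apply i))).div_const _)

lemma IsPS.mul {n : ℕ} {q : ℕ} {F G : (Fin n → ℝ) → ℝ} (hF : IsPS q F) (hG : IsPS q G) :
    IsPS q (fun y => F y * G y) := by
  obtain ⟨K1, c1, a1, hK1, hc1, rfl⟩ := hF
  obtain ⟨K2, c2, a2, hK2, hc2, rfl⟩ := hG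
  refine ⟨K1 * K2, fun k => c1 (finProdFinEquiv.symm k).1 * c2 (finProdFinEquiv.symm k).2,
    fun k i => a1 (finProdFinEquiv.symm k).1 i + a2 (finProdFinEquiv.symm k).2 i,
    Nat.mul_pos hK1 hK2, fun k => mul_pos (hc1 _) (hc2 _), ?_⟩
  funext y
  unfold psum
  rw [Finset.sum_mul_sum]
  rw [← Equiv.sum_comp (finProdFinEquiv : Fin K1 × Fin K2 ≃ Fin (K1 * K2)), Fintype.sum_prod_type]
  refine Finset.sum_congr rfl fun k1 _ => Finset.sum_congr rfl fun k2 _ => ?_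
  simp only [Equiv.symm_apply_apply]
  rw [mul_mul_mul_comm, ← Real.exp_add, ← add_div, ← Finset.sum_add_distrib]
  congr 2
  push_cast
  congr 1
  exact Finset.sum_congr rfl fun i _ => (add_mul _ _ _).symm

lemma IsPS.pow {n : ℕ} {q : ℕ} {F : (Fin n → ℝ) → ℝ} (h : IsPS q F) (m : ℕ) (hm : 0 < m) :
    IsPS q (fun y => F y ^ m) := by
  induction m with
  | zero => exact absurd hm (by simp)
  | succ m ih =>
    rcases Nat.eq_zero_or_pos m with rfl | hm'
    · simpa using h
    · have := (ih hm').mul h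
      simpa [pow_succ] using this

lemma IsPS.add {n : ℕ} {q : ℕ} {F G : (Fin n → ℝ) → ℝ} (hF : IsPS q F) (hG : IsPS q G) :
    IsPS q (fun y => F y + G y) := by
  obtain ⟨K1, c1, a1, hK1, hc1, rfl⟩ := hF
  obtain ⟨K2, c2, a2, hK2, hc2, rfl⟩ := hG
  refine ⟨K1 + K2, Fin.append c1 c2, Fin.append a1 a2, by omega, ?_, ?_⟩
  · intro k
    refine Fin.addCases (fun k => ?_) (fun k => ?_) k
    · simpa using hc1 k
    · simpa using hc2 k
  · funext y
    unfold psum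
    rw [Fin.sum_univ_add]
    congr 1 <;> refine Finset.sum_congr rfl fun k _ => by simp

lemma IsPS.qcast {n : ℕ} {q : ℕ} {F : (Fin n → ℝ) → ℝ} (h : IsPS q F) (r : ℕ) (hr : 0 < r) :
    IsPS (q * r) F := by
  obtain ⟨K, c, a, hK, hc, rfl⟩ := h
  refine ⟨K, c, fun k i => a k i * r, hK, hc, ?_⟩
  funext y
  unfold psum
  refine Finset.sum_congr rfl fun k _ => ?_
  congr 1
  congr 1
  have hr' : (r : ℝ) ≠ 0 := Nat.cast_ne_zero.mpr hr.ne'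
  push_cast
  rw [show ∑ i, (a k i : ℝ) * r * y i = (∑ i, (a k i : ℝ) * y i) * r by
    rw [Finset.sum_mul]; exact Finset.sum_congr rfl fun i _ => by ring]
  rw [mul_div_mul_right _ _ hr']

lemma isPS_const {n : ℕ} (q : ℕ) {c : ℝ} (hc : 0 < c) : IsPS q (fun _ : Fin n → ℝ => c) := by
  refine ⟨1, fun _ => c, fun _ _ => 0, Nat.one_pos, fun _ => hc, ?_⟩
  funext y
  simp [psum]

lemma lse_bounds (u v : ℝ) :
    max u v ≤ Real.log (Real.exp u + Real.exp v) ∧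
      Real.log (Real.exp u + Real.exp v) ≤ max u v + Real.log 2 := by
  have h1 : Real.exp (max u v) ≤ Real.exp u + Real.exp v := by
    rcases max_cases u v with ⟨h, _⟩ | ⟨h, _⟩ <;> rw [h] <;> nlinarith [Real.exp_pos u, Real.exp_pos v]
  have h2 : Real.exp u + Real.exp v ≤ 2 * Real.exp (max u v) := by
    have := Real.exp_le_exp.mpr (le_max_left u v)
    have := Real.exp_le_exp.mpr (le_max_right u v)
    linarith
  constructor
  · have := Real.log_le_log (Real.exp_pos _) h1
    rwa [Real.log_exp] at this
  · have hpos : (0:ℝ) < Real.exp u + Real.exp v := by positivity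
    have := Real.log_le_log hpos h2
    rwa [Real.log_mul (by norm_num) (Real.exp_ne_zero _), Real.log_exp, add_comm (Real.log 2)] at this

section Sset

variable {n : ℕ} (K : Set (Fin n → ℝ))

/-- The set of "subtraction-free" continuous functions on `K`. -/
def Sset : Set C(K, ℝ) :=
  {f | ∃ (p q : ℕ) (F G : (Fin n → ℝ) → ℝ), 0 < p ∧ 0 < q ∧ IsPS q F ∧ IsPS q G ∧
    ∀ z : K, f z = (Real.log (F (z : Fin n → ℝ)) - Real.log (G (z : Fin n → ℝ))) / p}

variable {K}

/-- Constructor for elements of `Sset`. -/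
noncomputable def sfMap (p : ℕ) {q : ℕ} {F G : (Fin n → ℝ) → ℝ}
    (hF : IsPS q F) (hG : IsPS q G) : C(K, ℝ) :=
  ⟨fun z => (Real.log (F (z : Fin n → ℝ)) - Real.log (G (z : Fin n → ℝ))) / p,
    (((hF.continuous.log fun y => (hF.pos y).ne').sub
      (hG.continuous.log fun y => (hG.pos y).ne')).div_const _).comp continuous_subtype_val⟩

lemma sfMap_mem {p q : ℕ} {F G : (Fin n → ℝ) → ℝ} (hp : 0 < p) (hq : 0 < q)
    (hF : IsPS q F) (hG : IsPS q G) : sfMap p hF hG ∈ Sset K :=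
  ⟨p, q, F, G, hp, hq, hF, hG, fun _ => rfl⟩

lemma const_mem (c : ℝ) : (ContinuousMap.const K c) ∈ Sset K := by
  refine ⟨1, 1, fun _ => Real.exp c, fun _ => 1, Nat.one_pos, Nat.one_pos,
    isPS_const 1 (Real.exp_pos c), isPS_const 1 one_pos, fun z => ?_⟩
  simp [Real.log_exp]

lemma neg_mem {f : C(K, ℝ)} (hf : f ∈ Sset K) : -f ∈ Sset K := by
  obtain ⟨p, q, F, G, hp, hq, hF, hG, hval⟩ := hf
  exact ⟨p, q, G, F, hp, hq, hG, hF, fun z => by simp [hval z]; ring⟩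

/-- A common-denominator representation for two elements of `Sset`. -/
lemma common_rep {f g : C(K, ℝ)} (hf : f ∈ Sset K) (hg : g ∈ Sset K) :
    ∃ (p q : ℕ) (F1 G1 F2 G2 : (Fin n → ℝ) → ℝ), 0 < p ∧ 0 < q ∧
      IsPS q F1 ∧ IsPS q G1 ∧ IsPS q F2 ∧ IsPS q G2 ∧
      (∀ z : K, f z = (Real.log (F1 (z:Fin n → ℝ)) - Real.log (G1 (z:Fin n → ℝ))) / p) ∧
      (∀ z : K, g z = (Real.log (F2 (z:Fin n → ℝ)) - Real.log (G2 (z:Fin n → ℝ))) / p) := by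
  obtain ⟨p1, q1, F1, G1, hp1, hq1, hF1, hG1, hval1⟩ := hf
  obtain ⟨p2, q2, F2, G2, hp2, hq2, hF2, hG2, hval2⟩ := hg
  refine ⟨p1 * p2, q1 * q2, fun y => F1 y ^ p2, fun y => G1 y ^ p2,
    fun y => F2 y ^ p1, fun y => G2 y ^ p1, Nat.mul_pos hp1 hp2, Nat.mul_pos hq1 hq2,
    (hF1.pow p2 hp2).qcast q2 hq2, (hG1.pow p2 hp2).qcast q2 hq2,
    Nat.mul_comm q2 q1 ▸ (hF2.pow p1 hp1).qcast q1 hq1,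
    Nat.mul_comm q2 q1 ▸ (hG2.pow p1 hp1).qcast q1 hq1, ?_, ?_⟩
  · intro z
    rw [hval1 z, Real.log_pow, Real.log_pow]
    have h1 : (p1 : ℝ) ≠ 0 := Nat.cast_ne_zero.mpr hp1.ne'
    have h2 : (p2 : ℝ) ≠ 0 := Nat.cast_ne_zero.mpr hp2.ne'
    push_cast
    field_simp
  · intro z
    rw [hval2 z, Real.log_pow, Real.log_pow]
    have h1 : (p1 : ℝ) ≠ 0 := Nat.cast_ne_zero.mpr hp1.ne'
    have h2 : (p2 : ℝ) ≠ 0 := Nat.cast_ne_zero.mpr hp2.ne'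
    push_cast
    field_simp

lemma affine_nat_mem (c : ℝ) (a b q : ℕ) (hq : 0 < q) (i : Fin n) (f : C(K, ℝ))
    (hf : ∀ z : K, f z = c + ((a : ℝ) - b) / q * (z : Fin n → ℝ) i) : f ∈ Sset K := by
  have hs : ∀ (m : ℕ) (y : Fin n → ℝ),
      ∑ j, ((if j = i then m else 0 : ℕ) : ℝ) * y j = (m : ℝ) * y i := by
    intro m y
    rw [Finset.sum_eq_single i]
    · simp
    · intro j _ hji; simp [hji]
    · simp
  have hq' : (q : ℝ) ≠ 0 := Nat.cast_ne_zero.mpr hq.ne'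
  refine ⟨1, q, psum q 1 (fun _ => Real.exp c) (fun _ j => if j = i then a else 0),
    psum q 1 (fun _ => 1) (fun _ j => if j = i then b else 0), Nat.one_pos, hq,
    ⟨1, _, _, Nat.one_pos, fun _ => Real.exp_pos c, rfl⟩,
    ⟨1, _, _, Nat.one_pos, fun _ => one_pos, rfl⟩, fun z => ?_⟩
  rw [hf z]
  simp only [psum, Fin.sum_univ_one, hs, one_mul, Nat.cast_one, div_one]
  rw [Real.log_mul (Real.exp_ne_zero _) (Real.exp_ne_zero _), Real.log_exp, Real.log_exp,
    Real.log_exp]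
  field_simp
  ring

lemma affine_rat_mem (c : ℝ) (r : ℚ) (i : Fin n) (f : C(K, ℝ))
    (hf : ∀ z : K, f z = c + (r : ℝ) * (z : Fin n → ℝ) i) : f ∈ Sset K := by
  rcases le_or_gt 0 r.num with hr | hr
  · refine affine_nat_mem c r.num.toNat 0 r.den r.pos i f fun z => ?_
    rw [hf z, Rat.cast_def]
    congr 2
    have h1 : ((r.num.toNat : ℕ) : ℝ) = (r.num : ℝ) := by
      rw [← Int.cast_natCast, Int.toNat_of_nonneg hr]
    rw [h1]
    push_cast
    ring
  · refine affine_nat_mem c 0 (-r.num).toNat r.den r.pos i f fun z => ?_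
    rw [hf z, Rat.cast_def]
    congr 2
    have h1 : (((-r.num).toNat : ℤ) : ℝ) = -(r.num : ℝ) := by
      rw [Int.toNat_of_nonneg (by omega)]; push_cast; ring
    push_cast at h1 ⊢
    rw [h1]
    ring

/-- Real-slope affine functions are in the closure. -/
lemma affine_real_mem_closure [CompactSpace K] (u ρ : ℝ) (x0 : Fin n → ℝ) (i : Fin n)
    (f : C(K, ℝ)) (hf : ∀ z : K, f z = u + ρ * ((z : Fin n → ℝ) i - x0 i)) :
    f ∈ closure (Sset K) := by
  rw [Metric.mem_closure_iff]
  intro ε hε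
  set h : C(K, ℝ) := ⟨fun z => (z : Fin n → ℝ) i - x0 i,
    ((continuous_apply i).comp continuous_subtype_val).sub continuous_const⟩ with hh
  have hd : (0:ℝ) < ‖h‖ + 1 := by positivity
  obtain ⟨r, hrr⟩ := exists_rat_near ρ (div_pos hε hd)
  set s : C(K, ℝ) := ⟨fun z : K => (u - r * x0 i) + (r : ℝ) * (z : Fin n → ℝ) i,
    continuous_const.add (continuous_const.mul
      ((continuous_apply i).comp continuous_subtype_val))⟩ with hsdef
  refine ⟨s, affine_rat_mem _ r i s fun z => rfl, ?_⟩
  have key : ∀ z : K, dist (f z) (s z) ≤ |ρ - r| * ‖h‖ := by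
    intro z
    rw [hf z, Real.dist_eq]
    have hsz : s z = (u - r * x0 i) + (r:ℝ) * (z : Fin n → ℝ) i := rfl
    rw [hsz]
    have : (u + ρ * ((z : Fin n → ℝ) i - x0 i)) - ((u - r * x0 i) + (r:ℝ) * (z : Fin n → ℝ) i)
        = (ρ - r) * ((z : Fin n → ℝ) i - x0 i) := by ring
    rw [this, abs_mul]
    have habs : |(z : Fin n → ℝ) i - x0 i| ≤ ‖h‖ := by
      simpa [hh, Real.norm_eq_abs] using h.norm_coe_le_norm z
    exact mul_le_mul_of_nonneg_left habs (abs_nonneg _)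
  have hle : dist f s ≤ |ρ - r| * ‖h‖ := (ContinuousMap.dist_le (by positivity)).mpr key
  calc dist f s ≤ |ρ - r| * ‖h‖ := hle
    _ ≤ |ρ - r| * (‖h‖ + 1) := mul_le_mul_of_nonneg_left (by linarith) (abs_nonneg _)
    _ < ε / (‖h‖ + 1) * (‖h‖ + 1) := mul_lt_mul_of_pos_right hrr hd
    _ = ε := div_mul_cancel₀ _ hd.ne'

/-- `Sset` approximates suprema of its elements. -/
lemma sup_approx [CompactSpace K] {f g : C(K, ℝ)} (hf : f ∈ Sset K) (hg : g ∈ Sset K)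
    {ε : ℝ} (hε : 0 < ε) : ∃ s ∈ Sset K, dist s (f ⊔ g) ≤ ε := by
  obtain ⟨p, q, F1, G1, F2, G2, hp, hq, hF1, hG1, hF2, hG2, hval1, hval2⟩ := common_rep hf hg
  -- choose m with log 2 / (p * m) ≤ ε
  obtain ⟨m0, hm0⟩ := exists_nat_ge (Real.log 2 / ((p : ℝ) * ε))
  set m := m0 + 1 with hm
  have hmpos : 0 < m := Nat.succ_pos _
  have hpm : (0:ℝ) < (p : ℝ) * m := by positivity
  have hbound : Real.log 2 / ((p:ℝ) * m) ≤ ε := by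
    rw [div_le_iff₀ hpm]
    have h2 : Real.log 2 / ((p : ℝ) * ε) ≤ m := le_trans hm0 (by exact_mod_cast Nat.le_succ m0)
    have hpe : (0:ℝ) < (p:ℝ) * ε := by positivity
    rw [div_le_iff₀ hpe] at h2
    nlinarith [Real.log_pos (by norm_num : (1:ℝ) < 2)]
  set Fm : (Fin n → ℝ) → ℝ := fun y => F1 y ^ m * G2 y ^ m + F2 y ^ m * G1 y ^ m with hFm
  set Gm : (Fin n → ℝ) → ℝ := fun y => G1 y ^ m * G2 y ^ m with hGm
  have hFmPS : IsPS q Fm := ((hF1.pow m hmpos).mul (hG2.pow m hmpos)).add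
    ((hF2.pow m hmpos).mul (hG1.pow m hmpos))
  have hGmPS : IsPS q Gm := (hG1.pow m hmpos).mul (hG2.pow m hmpos)
  refine ⟨sfMap (p * m) hFmPS hGmPS, sfMap_mem (Nat.mul_pos hp hmpos) hq hFmPS hGmPS, ?_⟩
  rw [ContinuousMap.dist_le hε.le]
  intro z
  set y : Fin n → ℝ := (z : Fin n → ℝ) with hy
  set u : ℝ := ((p : ℝ) * m) * f z with hu
  set v : ℝ := ((p : ℝ) * m) * g z with hv
  have hexpu : Real.exp u = (F1 y / G1 y) ^ m := by
    rw [hu, hval1 z]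
    have hpne : (p : ℝ) ≠ 0 := Nat.cast_ne_zero.mpr hp.ne'
    rw [show (p:ℝ) * m * ((Real.log (F1 y) - Real.log (G1 y)) / p)
        = (m : ℝ) * (Real.log (F1 y) - Real.log (G1 y)) by field_simp]
    rw [Real.exp_nat_mul, Real.exp_sub, Real.exp_log (hF1.pos y), Real.exp_log (hG1.pos y)]
  have hexpv : Real.exp v = (F2 y / G2 y) ^ m := by
    rw [hv, hval2 z]
    have hpne : (p : ℝ) ≠ 0 := Nat.cast_ne_zero.mpr hp.ne'
    rw [show (p:ℝ) * m * ((Real.log (F2 y) - Real.log (G2 y)) / p)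
        = (m : ℝ) * (Real.log (F2 y) - Real.log (G2 y)) by field_simp]
    rw [Real.exp_nat_mul, Real.exp_sub, Real.exp_log (hF2.pos y), Real.exp_log (hG2.pos y)]
  have hsum : Real.exp u + Real.exp v = Fm y / Gm y := by
    rw [hexpu, hexpv, hFm, hGm]
    have h1 := (hG1.pos y).ne'
    have h2 := (hG2.pos y).ne'
    field_simp
    rw [div_pow, div_pow]
    field_simp
  have hlog : Real.log (Fm y) - Real.log (Gm y) = Real.log (Real.exp u + Real.exp v) := by
    rw [hsum, Real.log_div (hFmPS.pos y).ne' (hGmPS.pos y).ne']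
  have hsval : sfMap (p * m) hFmPS hGmPS z
      = Real.log (Real.exp u + Real.exp v) / ((p:ℝ) * m) := by
    show (Real.log (Fm y) - Real.log (Gm y)) / ((p * m : ℕ) : ℝ) = _
    rw [hlog]; push_cast; ring
  obtain ⟨hlb, hub⟩ := lse_bounds u v
  have hmaxuv : max u v = ((p:ℝ) * m) * max (f z) (g z) := by
    rw [hu, hv]
    rcases le_total (f z) (g z) with h | h
    · rw [max_eq_right h, max_eq_right (by nlinarith)]
    · rw [max_eq_left h, max_eq_left (by nlinarith)]
  have hfg : (f ⊔ g) z = max (f z) (g z) := rfl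
  have e1 : ((p:ℝ)*m) * max (f z) (g z) ≤ Real.log (Real.exp u + Real.exp v) := by
    rw [← hmaxuv]; exact hlb
  have e2 : Real.log (Real.exp u + Real.exp v) ≤ ((p:ℝ)*m) * max (f z) (g z) + Real.log 2 := by
    rw [← hmaxuv]; exact hub
  rw [Real.dist_eq, hsval, hfg, abs_le]
  constructor
  · have h1 : max (f z) (g z) ≤ Real.log (Real.exp u + Real.exp v) / ((p:ℝ)*m) :=
      (le_div_iff₀ hpm).mpr (by linarith)
    linarith
  · have h3 : (max (f z) (g z) + Real.log 2 / ((p:ℝ)*m)) * ((p:ℝ)*m)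
        = ((p:ℝ)*m) * max (f z) (g z) + Real.log 2 := by
      field_simp
    have h4 : Real.log (Real.exp u + Real.exp v) / ((p:ℝ)*m)
        ≤ max (f z) (g z) + Real.log 2 / ((p:ℝ)*m) := by
      rw [div_le_iff₀ hpm, h3]; exact e2
    linarith

end Sset

/-- The key density lemma. -/
lemma dense_lemma {n : ℕ} (K : Set (Fin n → ℝ)) (hK : IsCompact K)
    (g : (Fin n → ℝ) → ℝ) (hg : ContinuousOn g K) (δ : ℝ) (hδ : 0 < δ) :
    ∃ (p q : ℕ) (F G : (Fin n → ℝ) → ℝ), 0 < p ∧ 0 < q ∧ IsPS q F ∧ IsPS q G ∧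
      ∀ y ∈ K, |g y - (Real.log (F y) - Real.log (G y)) / p| ≤ δ := by
  haveI : CompactSpace K := isCompact_iff_compactSpace.mp hK
  set L := closure (Sset K) with hL
  have hneS : (Sset K).Nonempty := ⟨_, const_mem 0⟩
  have hneL : L.Nonempty := ⟨_, subset_closure hneS.choose_spec⟩
  have hnegL : ∀ f ∈ L, -f ∈ L := by
    intro f hf
    rw [hL, Metric.mem_closure_iff] at hf ⊢
    intro ε hε
    obtain ⟨s, hs, hd⟩ := hf ε hε
    exact ⟨-s, neg_mem hs, by simpa [dist_neg_neg] using hd⟩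
  have hsupL : ∀ f ∈ L, ∀ g' ∈ L, f ⊔ g' ∈ L := by
    intro f hf g' hg'
    rw [hL, Metric.mem_closure_iff] at hf hg' ⊢
    intro ε hε
    obtain ⟨f', hf', hdf⟩ := hf (ε/3) (by linarith)
    obtain ⟨g'', hg'', hdg⟩ := hg' (ε/3) (by linarith)
    obtain ⟨s, hs, hds⟩ := sup_approx hf' hg'' (show (0:ℝ) < ε/4 by linarith)
    refine ⟨s, hs, ?_⟩
    have h1 : dist (f ⊔ g') (f' ⊔ g'') ≤ max (dist f f') (dist g' g'') := by
      rw [ContinuousMap.dist_le (le_max_of_le_left dist_nonneg)]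
      intro z
      have h2 : dist ((f ⊔ g') z) ((f' ⊔ g'') z) ≤ max (dist (f z) (f' z)) (dist (g' z) (g'' z)) := by
        simp only [ContinuousMap.sup_apply, Real.dist_eq]
        exact abs_max_sub_max_le_max _ _ _ _
      exact h2.trans (max_le_max (ContinuousMap.dist_apply_le_dist z)
        (ContinuousMap.dist_apply_le_dist z))
    have h3 : dist (f ⊔ g') s ≤ dist (f ⊔ g') (f' ⊔ g'') + dist (f' ⊔ g'') s := dist_triangle _ _ _
    have h4 : dist (f' ⊔ g'') s = dist s (f' ⊔ g'') := dist_comm _ _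
    have h5 : max (dist f f') (dist g' g'') < ε/3 := max_lt hdf hdg
    calc dist (f ⊔ g') s ≤ dist (f ⊔ g') (f' ⊔ g'') + dist (f' ⊔ g'') s := h3
      _ < ε/3 + ε/4 := by
          refine add_lt_add_of_lt_of_le (lt_of_le_of_lt h1 h5) ?_
          rw [h4]; exact hds
      _ < ε := by linarith
  have hinfL : ∀ f ∈ L, ∀ g' ∈ L, f ⊓ g' ∈ L := by
    intro f hf g' hg'
    have heq : f ⊓ g' = -((-f) ⊔ (-g')) := by
      ext z
      simp only [ContinuousMap.inf_apply, ContinuousMap.neg_apply, ContinuousMap.sup_apply]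
      rw [max_neg_neg, neg_neg]
    rw [heq]
    exact hnegL _ (hsupL _ (hnegL f hf) _ (hnegL g' hg'))
  have hsep : L.SeparatesPointsStrongly := by
    intro v x y
    by_cases hxy : x = y
    · subst hxy
      exact ⟨ContinuousMap.const K (v x), subset_closure (const_mem _), rfl, rfl⟩
    · have hex : ∃ i, (x : Fin n → ℝ) i ≠ (y : Fin n → ℝ) i := by
        by_contra h
        push_neg at h
        exact hxy (Subtype.ext (funext h))
      obtain ⟨i, hi⟩ := hex
      have hne' : (y : Fin n → ℝ) i - (x : Fin n → ℝ) i ≠ 0 := sub_ne_zero.mpr (Ne.symm hi)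
      set ρ : ℝ := (v y - v x) / ((y : Fin n → ℝ) i - (x : Fin n → ℝ) i) with hρ
      refine ⟨⟨fun z => v x + ρ * ((z : Fin n → ℝ) i - (x : Fin n → ℝ) i),
        continuous_const.add (continuous_const.mul
          (((continuous_apply i).comp continuous_subtype_val).sub continuous_const))⟩,
        affine_real_mem_closure (v x) ρ (x : Fin n → ℝ) i _ (fun z => rfl), ?_, ?_⟩
      · show v x + ρ * ((x : Fin n → ℝ) i - (x : Fin n → ℝ) i) = v x
        ring
      · show v x + ρ * ((y : Fin n → ℝ) i - (x : Fin n → ℝ) i) = v y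
        rw [hρ, div_mul_cancel₀ _ hne']
        ring
  have htop : closure L = ⊤ := ContinuousMap.sublattice_closure_eq_top L hneL hinfL hsupL hsep
  have hLtop : L = Set.univ := by
    rw [hL] at htop ⊢
    rw [closure_closure] at htop
    exact htop
  set gc : C(K, ℝ) := ⟨K.restrict g, hg.restrict⟩ with hgc
  have hgcL : gc ∈ L := hLtop ▸ Set.mem_univ gc
  rw [hL, Metric.mem_closure_iff] at hgcL
  obtain ⟨s, hsS, hd⟩ := hgcL δ hδ
  obtain ⟨p, q, F, G, hp, hq, hF, hG, hval⟩ := hsS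
  refine ⟨p, q, F, G, hp, hq, hF, hG, fun y hy => ?_⟩
  have h6 : dist (gc ⟨y, hy⟩) (s ⟨y, hy⟩) ≤ dist gc s := ContinuousMap.dist_apply_le_dist _
  have h7 : gc ⟨y, hy⟩ = g y := rfl
  have h8 := hval ⟨y, hy⟩
  rw [Real.dist_eq, h7, h8] at h6
  exact h6.trans hd.le

lemma rel_err {L f ε : ℝ} (hL : 0 < L) (hf : 0 < f) (hε : 0 < ε)
    (h : |Real.log L - Real.log f| ≤ Real.log (1 + ε)) :
    |(L - f) / min L f| ≤ ε := by
  have hmin : 0 < min L f := lt_min hL hf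
  rw [abs_div, abs_of_pos hmin, div_le_iff₀ hmin]
  have h1ε : (0:ℝ) < 1 + ε := by linarith
  rcases le_total f L with hfL | hLf
  · rw [min_eq_right hfL, abs_of_nonneg (by linarith)]
    have h2 : Real.log L - Real.log f ≤ Real.log (1+ε) := (abs_le.mp h).2
    have hLle : L ≤ (1+ε) * f := by
      have h3 := Real.exp_le_exp.mpr (show Real.log L ≤ Real.log (1+ε) + Real.log f by linarith)
      rwa [Real.exp_log hL, Real.exp_add, Real.exp_log h1ε, Real.exp_log hf] at h3
    nlinarith
  · rw [min_eq_left hLf, abs_of_nonpos (by linarith), neg_sub]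
    have h2 : Real.log f - Real.log L ≤ Real.log (1+ε) := by
      have := (abs_le.mp h).1; linarith
    have hfle : f ≤ (1+ε) * L := by
      have h3 := Real.exp_le_exp.mpr (show Real.log f ≤ Real.log (1+ε) + Real.log L by linarith)
      rwa [Real.exp_log hf, Real.exp_add, Real.exp_log h1ε, Real.exp_log hL] at h3
    nlinarith

end SFUA

/-- **Universal approximation by subtraction-free expressions.**
Let `R ⊂ ℝ_{>0}ⁿ` be a compact log-convex set and `ℓ : R → ℝ_{>0}` a continuous positive
function.  Then for every `ε > 0` there exist positive integers `p, q` and two polynomials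
`P, Q` in `n` variables with positive real coefficients and nonnegative integer exponents
such that `f(x) = (P(x₁^{1/q},…,xₙ^{1/q}) / Q(x₁^{1/q},…,xₙ^{1/q}))^{1/p}` satisfies
`|(ℓ(x) − f(x)) / min(ℓ(x), f(x))| ≤ ε` for all `x ∈ R`. -/
theorem subtraction_free_universal_approx
    (n : ℕ) (R : Set (Fin n → ℝ)) (hpos : ∀ x ∈ R, ∀ i, 0 < x i)
    (hcomp : IsCompact R)
    (hlogconv : Convex ℝ ((fun x => fun i => Real.log (x i)) '' R))
    (ℓ : (Fin n → ℝ) → ℝ) (hℓpos : ∀ x ∈ R, 0 < ℓ x) (hcont : ContinuousOn ℓ R)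
    (ε : ℝ) (hε : 0 < ε) :
    ∃ (p q : ℕ), 0 < p ∧ 0 < q ∧
      ∃ (KP KQ : ℕ), 0 < KP ∧ 0 < KQ ∧
        ∃ (cP : Fin KP → ℝ) (aP : Fin KP → Fin n → ℕ)
          (cQ : Fin KQ → ℝ) (aQ : Fin KQ → Fin n → ℕ),
          (∀ k, 0 < cP k) ∧ (∀ k, 0 < cQ k) ∧
          ∀ x ∈ R,
            |(ℓ x
              - ((∑ k, cP k * ∏ i, (x i ^ (1 / (q : ℝ))) ^ (aP k i))
                  / (∑ k, cQ k * ∏ i, (x i ^ (1 / (q : ℝ))) ^ (aQ k i))) ^ (1 / (p : ℝ)))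
              / min (ℓ x)
                  (((∑ k, cP k * ∏ i, (x i ^ (1 / (q : ℝ))) ^ (aP k i))
                    / (∑ k, cQ k * ∏ i, (x i ^ (1 / (q : ℝ))) ^ (aQ k i))) ^ (1 / (p : ℝ)))|
              ≤ ε := by
  classical
  set K : Set (Fin n → ℝ) := (fun x => fun i => Real.log (x i)) '' R with hK
  have hKcomp : IsCompact K := by
    refine hcomp.image_of_continuousOn ?_
    refine continuousOn_pi.mpr fun i => ContinuousOn.log ?_ fun x hx => (hpos x hx i).ne'
    exact (continuous_apply i).continuousOn
  have hEy : ∀ y ∈ K, (fun i => Real.exp (y i)) ∈ R := by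
    rintro y ⟨x, hx, rfl⟩
    have hxx : (fun i => Real.exp (Real.log (x i))) = x :=
      funext fun i => Real.exp_log (hpos x hx i)
    show (fun i => Real.exp (Real.log (x i))) ∈ R
    rw [hxx]
    exact hx
  set g : (Fin n → ℝ) → ℝ := fun y => Real.log (ℓ (fun i => Real.exp (y i))) with hg
  have hgcont : ContinuousOn g K := by
    have hE : Continuous (fun y : Fin n → ℝ => fun i => Real.exp (y i)) :=
      continuous_pi fun i => Real.continuous_exp.comp (continuous_apply i)
    refine ContinuousOn.log ?_ fun y hy => (hℓpos _ (hEy y hy)).ne'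
    exact hcont.comp hE.continuousOn hEy
  have hδ : 0 < Real.log (1 + ε) := Real.log_pos (by linarith)
  obtain ⟨p, q, F, G, hp, hq, hF, hG, happrox⟩ :=
    SFUA.dense_lemma K hKcomp g hgcont (Real.log (1 + ε)) hδ
  obtain ⟨KP, cP, aP, hKP, hcP, rfl⟩ := hF
  obtain ⟨KQ, cQ, aQ, hKQ, hcQ, rfl⟩ := hG
  refine ⟨p, q, hp, hq, KP, KQ, hKP, hKQ, cP, aP, cQ, aQ, hcP, hcQ, fun x hx => ?_⟩
  set y : Fin n → ℝ := fun i => Real.log (x i) with hy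
  have hyK : y ∈ K := ⟨x, hx, rfl⟩
  have hprod : ∀ (a : Fin n → ℕ),
      ∏ i, (x i ^ (1/(q:ℝ))) ^ (a i) = Real.exp ((∑ i, (a i : ℝ) * y i)/q) := by
    intro a
    calc ∏ i, (x i ^ (1/(q:ℝ)))^(a i) = ∏ i, Real.exp ((a i : ℝ) * y i / q) := by
          refine Finset.prod_congr rfl fun i _ => ?_
          rw [Real.rpow_def_of_pos (hpos x hx i), ← Real.exp_nat_mul]
          congr 1
          show (a i : ℝ) * (Real.log (x i) * (1/(q:ℝ))) = (a i : ℝ) * Real.log (x i) / q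
          ring
      _ = Real.exp (∑ i, (a i : ℝ) * y i / q) := (Real.exp_sum _ _).symm
      _ = Real.exp ((∑ i, (a i : ℝ) * y i)/q) := by rw [Finset.sum_div]
  have hPx : ∑ k, cP k * ∏ i, (x i ^ (1/(q:ℝ)))^(aP k i) = SFUA.psum q KP cP aP y := by
    simp only [SFUA.psum]
    exact Finset.sum_congr rfl fun k _ => by rw [hprod (aP k)]
  have hQx : ∑ k, cQ k * ∏ i, (x i ^ (1/(q:ℝ)))^(aQ k i) = SFUA.psum q KQ cQ aQ y := by
    simp only [SFUA.psum]
    exact Finset.sum_congr rfl fun k _ => by rw [hprod (aQ k)]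
  set Fv : ℝ := SFUA.psum q KP cP aP y with hFv
  set Gv : ℝ := SFUA.psum q KQ cQ aQ y with hGv
  have hFvpos : 0 < Fv := SFUA.psum_pos hKP hcP y
  have hGvpos : 0 < Gv := SFUA.psum_pos hKQ hcQ y
  have hratio : (Fv/Gv) ^ (1/(p:ℝ)) = Real.exp ((Real.log Fv - Real.log Gv)/p) := by
    rw [Real.rpow_def_of_pos (div_pos hFvpos hGvpos), Real.log_div hFvpos.ne' hGvpos.ne']
    congr 1
    ring
  rw [hPx, hQx, hratio]
  have hgy : g y = Real.log (ℓ x) := by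
    have hxx : (fun i => Real.exp (y i)) = x := funext fun i => Real.exp_log (hpos x hx i)
    rw [hg]
    simp only [hxx]
  have happ := happrox y hyK
  rw [hgy] at happ
  refine SFUA.rel_err (hℓpos x hx) (Real.exp_pos _) hε ?_
  rwa [Real.log_exp]
end

section
/- Let T > 0, K ∈ ℕ, α^{(1)},…,α^{(K)} ∈ ℝⁿ and β_1,…,β_K ∈ ℝ, and suppose the vectors α^{(1)},…,α^{(K)} constitute an affine generating family of ℝⁿ, i.e., their affine hull is all of ℝⁿ. Then the function f_T : ℝⁿ → ℝ defined by f_T(x) = T·log(Σ_{k=1}^K exp(⟨α^{(k)}, x⟩/T + β_k/T)) is strictly convex on ℝⁿ. -/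
set_option maxHeartbeats 1000000 in
/-- **Strict convexity of LSE_T functions.**
Let `T > 0`, `K ∈ ℕ`, `α⁽¹⁾,…,α⁽ᴷ⁾ ∈ ℝⁿ`, `β₁,…,βₖ ∈ ℝ`, and suppose the vectors
`α⁽¹⁾,…,α⁽ᴷ⁾` constitute an affine generating family of `ℝⁿ` (their affine hull is all of
`ℝⁿ`).  Then `f_T(x) = T·log (∑ₖ exp(⟨α⁽ᵏ⁾, x⟩/T + βₖ/T))` is strictly convex on `ℝⁿ`. -/
theorem lse_strictConvex
    (n K : ℕ) (hK : 0 < K) (T : ℝ) (hT : 0 < T)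
    (α : Fin K → Fin n → ℝ) (β : Fin K → ℝ)
    (hgen : affineSpan ℝ (Set.range α) = ⊤) :
    StrictConvexOn ℝ Set.univ
      (fun x : Fin n → ℝ =>
        T * Real.log (∑ k, Real.exp ((∑ i, α k i * x i) / T + β k / T))) := by
  constructor
  · exact convex_univ
  intro x _ y _ hxy lam mu hlam hmu hlm
  obtain rfl : mu = 1 - lam := by linarith
  have hlam1 : lam < 1 := by linarith
  simp only [smul_eq_mul, Pi.add_apply, Pi.smul_apply]
  set u : Fin K → ℝ := fun k => (∑ i, α k i * x i) / T + β k / T with hu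
  set v : Fin K → ℝ := fun k => (∑ i, α k i * y i) / T + β k / T with hv
  have hz : ∀ k : Fin K,
      (∑ i, α k i * (lam * x i + (1 - lam) * y i)) / T + β k / T
        = lam * u k + (1 - lam) * v k := by
    intro k
    have h1 : ∑ i, α k i * (lam * x i + (1 - lam) * y i)
        = lam * ∑ i, α k i * x i + (1 - lam) * ∑ i, α k i * y i := by
      rw [Finset.mul_sum, Finset.mul_sum, ← Finset.sum_add_distrib]
      exact Finset.sum_congr rfl fun i _ => by ring
    rw [h1, hu, hv]; ring
  simp_rw [hz]
  set A : ℝ := ∑ k, Real.exp (u k) with hA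
  set B : ℝ := ∑ k, Real.exp (v k) with hB
  have hApos : 0 < A :=
    Finset.sum_pos (fun k _ => Real.exp_pos _) ⟨⟨0, hK⟩, Finset.mem_univ _⟩
  have hBpos : 0 < B :=
    Finset.sum_pos (fun k _ => Real.exp_pos _) ⟨⟨0, hK⟩, Finset.mem_univ _⟩
  -- the key existence of an index where normalized weights differ
  have hne : ∃ k : Fin K, Real.exp (u k) / A ≠ Real.exp (v k) / B := by
    by_contra h
    push_neg at h
    -- then ⟨α k, x - y⟩ is constant in k
    have hc : ∀ k : Fin K, ∑ i, α k i * (x i - y i) = T * (Real.log A - Real.log B) := by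
      intro k
      have := h k
      have h2 : Real.log (Real.exp (u k) / A) = Real.log (Real.exp (v k) / B) := by rw [this]
      rw [Real.log_div (Real.exp_ne_zero _) hApos.ne',
          Real.log_div (Real.exp_ne_zero _) hBpos.ne',
          Real.log_exp, Real.log_exp] at h2
      have h3 : u k - v k = Real.log A - Real.log B := by linarith
      have h4 : u k - v k = (∑ i, α k i * (x i - y i)) / T := by
        rw [hu, hv]
        have : ∑ i, α k i * (x i - y i) = (∑ i, α k i * x i) - ∑ i, α k i * y i := by
          rw [← Finset.sum_sub_distrib]
          exact Finset.sum_congr rfl fun i _ => by ring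
        rw [this]; ring
      rw [h4] at h3
      field_simp at h3
      linarith [h3]
    -- linear functional vanishing on the vector span
    set d : Fin n → ℝ := fun i => x i - y i with hd
    let L : (Fin n → ℝ) →ₗ[ℝ] ℝ :=
      { toFun := fun w => ∑ i, w i * d i
        map_add' := fun w₁ w₂ => by
          simp only [Pi.add_apply]
          rw [← Finset.sum_add_distrib]
          exact Finset.sum_congr rfl fun i _ => by ring
        map_smul' := fun c w => by
          simp only [Pi.smul_apply, smul_eq_mul, RingHom.id_apply]
          rw [Finset.mul_sum]
          exact Finset.sum_congr rfl fun i _ => by ring }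
    have hker : vectorSpan ℝ (Set.range α) ≤ LinearMap.ker L := by
      rw [vectorSpan_def, Submodule.span_le]
      rintro w hw
      rw [Set.mem_vsub] at hw
      obtain ⟨w1, hw1, w2, hw2, rfl⟩ := hw
      obtain ⟨k1, rfl⟩ := hw1
      obtain ⟨k2, rfl⟩ := hw2
      have : L (α k1 -ᵥ α k2) = L (α k1) - L (α k2) := by
        simp [vsub_eq_sub, map_sub]
      simp only [SetLike.mem_coe, LinearMap.mem_ker, this]
      have e1 : L (α k1) = T * (Real.log A - Real.log B) := hc k1
      have e2 : L (α k2) = T * (Real.log A - Real.log B) := hc k2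
      rw [e1, e2, sub_self]
    have htop : vectorSpan ℝ (Set.range α) = ⊤ :=
      AffineSubspace.vectorSpan_eq_top_of_affineSpan_eq_top (k := ℝ) (V := Fin n → ℝ) (P := Fin n → ℝ) hgen
    rw [htop, top_le_iff] at hker
    have hLd : L d = 0 := by
      have : d ∈ LinearMap.ker L := hker ▸ Submodule.mem_top
      exact LinearMap.mem_ker.mp this
    have hsq : ∑ i, d i * d i = 0 := hLd
    have hdzero : ∀ i, d i = 0 := by
      intro i
      have hterm : ∀ j ∈ (Finset.univ : Finset (Fin n)), 0 ≤ d j * d j :=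
        fun j _ => mul_self_nonneg _
      have := (Finset.sum_eq_zero_iff_of_nonneg hterm).mp hsq i (Finset.mem_univ i)
      exact mul_self_eq_zero.mp this
    apply hxy
    funext i
    have := hdzero i
    simp only [hd] at this
    linarith
  obtain ⟨k0, hk0⟩ := hne
  -- per-term bounds
  set E : ℝ := Real.exp (lam * Real.log A + (1 - lam) * Real.log B) with hE
  have hkey : ∀ k : Fin K, Real.exp (lam * u k + (1 - lam) * v k)
      ≤ (lam * (Real.exp (u k) / A) + (1 - lam) * (Real.exp (v k) / B)) * E ∧
      (Real.exp (u k) / A ≠ Real.exp (v k) / B →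
        Real.exp (lam * u k + (1 - lam) * v k)
          < (lam * (Real.exp (u k) / A) + (1 - lam) * (Real.exp (v k) / B)) * E) := by
    intro k
    set p : ℝ := Real.exp (u k) / A with hp
    set q : ℝ := Real.exp (v k) / B with hq
    have hppos : 0 < p := div_pos (Real.exp_pos _) hApos
    have hqpos : 0 < q := div_pos (Real.exp_pos _) hBpos
    have hcomb : 0 < lam * p + (1 - lam) * q := by positivity
    have hlogp : Real.log p = u k - Real.log A := by
      rw [hp, Real.log_div (Real.exp_ne_zero _) hApos.ne', Real.log_exp]
    have hlogq : Real.log q = v k - Real.log B := by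
      rw [hq, Real.log_div (Real.exp_ne_zero _) hBpos.ne', Real.log_exp]
    have hRHS : (lam * p + (1 - lam) * q) * E
        = Real.exp (Real.log (lam * p + (1 - lam) * q)
            + (lam * Real.log A + (1 - lam) * Real.log B)) := by
      rw [Real.exp_add, Real.exp_log hcomb, hE]
    have hexpo : lam * u k + (1 - lam) * v k
        = (lam * Real.log p + (1 - lam) * Real.log q)
          + (lam * Real.log A + (1 - lam) * Real.log B) := by
      rw [hlogp, hlogq]; ring
    constructor
    · -- non-strict
      have hconc : lam * Real.log p + (1 - lam) * Real.log q
          ≤ Real.log (lam * p + (1 - lam) * q) := by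
        have := strictConcaveOn_log_Ioi.concaveOn.2 (Set.mem_Ioi.mpr hppos)
          (Set.mem_Ioi.mpr hqpos) hlam.le hmu.le hlm
        simpa [smul_eq_mul] using this
      rw [hRHS, hexpo]
      exact Real.exp_le_exp.mpr (by linarith)
    · intro hpq
      have hconc : lam * Real.log p + (1 - lam) * Real.log q
          < Real.log (lam * p + (1 - lam) * q) := by
        have := strictConcaveOn_log_Ioi.2 (Set.mem_Ioi.mpr hppos)
          (Set.mem_Ioi.mpr hqpos) hpq hlam hmu hlm
        simpa [smul_eq_mul] using this
      rw [hRHS, hexpo]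
      exact Real.exp_lt_exp.mpr (by linarith)
  have hsum : (∑ k, Real.exp (lam * u k + (1 - lam) * v k)) < E := by
    have hlt : (∑ k, Real.exp (lam * u k + (1 - lam) * v k))
        < ∑ k, (lam * (Real.exp (u k) / A) + (1 - lam) * (Real.exp (v k) / B)) * E :=
      Finset.sum_lt_sum (fun k _ => (hkey k).1)
        ⟨k0, Finset.mem_univ _, (hkey k0).2 hk0⟩
    have hsum1 : ∑ k, (lam * (Real.exp (u k) / A) + (1 - lam) * (Real.exp (v k) / B)) = 1 := by
      rw [Finset.sum_add_distrib, ← Finset.mul_sum, ← Finset.mul_sum,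
          ← Finset.sum_div, ← Finset.sum_div, ← hA, ← hB,
          div_self hApos.ne', div_self hBpos.ne']
      ring
    calc (∑ k, Real.exp (lam * u k + (1 - lam) * v k))
        < ∑ k, (lam * (Real.exp (u k) / A) + (1 - lam) * (Real.exp (v k) / B)) * E := hlt
      _ = (∑ k, (lam * (Real.exp (u k) / A) + (1 - lam) * (Real.exp (v k) / B))) * E := by
          rw [Finset.sum_mul]
      _ = E := by rw [hsum1, one_mul]
  have hSpos : 0 < ∑ k, Real.exp (lam * u k + (1 - lam) * v k) :=
    Finset.sum_pos (fun k _ => Real.exp_pos _) ⟨⟨0, hK⟩, Finset.mem_univ _⟩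
  have hlog : Real.log (∑ k, Real.exp (lam * u k + (1 - lam) * v k))
      < lam * Real.log A + (1 - lam) * Real.log B := by
    have := Real.log_lt_log hSpos hsum
    rwa [hE, Real.log_exp] at this
  have : T * Real.log (∑ k, Real.exp (lam * u k + (1 - lam) * v k))
      < T * (lam * Real.log A + (1 - lam) * Real.log B) :=
    (mul_lt_mul_iff_right₀ hT).mpr hlog
  calc T * Real.log (∑ k, Real.exp (lam * u k + (1 - lam) * v k))
      < T * (lam * Real.log A + (1 - lam) * Real.log B) := this
    _ = lam * (T * Real.log A) + (1 - lam) * (T * Real.log B) := by ring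
end
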